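/- arXiv:2405.14721 — 5 statements merged into one kernel-verified Lean document; each statement's English description precedes it below -/
import Mathlib

section
/- Let N_j denote, for j ∈ K, the (j,j)-minor of the matrix B(z_c), i.e. the determinant of B(z_c) with its j-th row and j-th column removed. Then N₀ ≠ 0, and for each j ∈ K one has U_j = N_j/N₀, and moreover α = (1/k) Σ_{j=0}^{k−1} (N_j/N₀)(1 − ρ_j(z_c)). -/
open MeasureTheory Matrix Filter

noncomputable section

/-- The maximum of the support (within `[0,1]`) of a measure `μ` on `ℝ`:
`sup {x ∈ [0,1] : μ([x,1]) > 0}`. -/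
def etaSup (μ : Measure ℝ) : ℝ :=
  sSup {x | x ∈ Set.Icc (0:ℝ) 1 ∧ 0 < μ (Set.Icc x 1)}

/-- Membership in `I_μ`: `z ≥ 0` and `∑_{n≥0} z^n ∫ x^n β_j q_j(dx) < ∞` for every `j`. -/
def memIm (k : ℕ) (β : Fin k → ℝ) (q : Fin k → Measure ℝ) (z : ℝ) : Prop :=
  0 ≤ z ∧ ∀ j : Fin k,
    (∑' n : ℕ, ENNReal.ofReal (z ^ n) * ∫⁻ x, ENNReal.ofReal (x ^ n * β j) ∂(q j)) < ⊤

/-- The matrix `A(z)` with entries `A(z)_{i,j} = μ_j^{[i−j]}(z)`, where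
`μ_j^i(z) = ∫ (zx)^i / (1 − (zx)^k) β_j q_j(dx)`. -/
def Amat (k : ℕ) (β : Fin k → ℝ) (q : Fin k → Measure ℝ) (z : ℝ) :
    Matrix (Fin k) (Fin k) ℝ :=
  Matrix.of fun i j =>
    ∫ x, (z * x) ^ (((i - j : Fin k) : ℕ)) / (1 - (z * x) ^ k) * β j ∂(q j)

/-- `ρ_j(z) = ∫ β_j q_j(dx) / (1 − z x)`. -/
def rhoFun (k : ℕ) (β : Fin k → ℝ) (q : Fin k → Measure ℝ) (z : ℝ) (j : Fin k) : ℝ :=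
  ∫ x, β j / (1 - z * x) ∂(q j)

section MT



variable {m : ℕ} {β : Fin (m+1) → ℝ} {q : Fin (m+1) → Measure ℝ} {z : ℝ}

lemma meas_pow (z : ℝ) (p k : ℕ) (b : ℝ) :
    Measurable (fun x : ℝ => (z * x) ^ p / (1 - (z * x) ^ k) * b) := by
  fun_prop

/-- a.e. with respect to `q j`: `0 ≤ x ≤ 1` and `z x < 1`. -/
lemma ae_good [∀ i, IsProbabilityMeasure (q i)]
    (hβ : ∀ i, β i ∈ Set.Ioo (0:ℝ) 1) (hq : ∀ i, q i (Set.Icc (0:ℝ) 1)ᶜ = 0)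
    (hm : memIm (m+1) β q z) (j : Fin (m+1)) :
    ∀ᵐ x ∂(q j), 0 ≤ x ∧ x ≤ 1 ∧ z * x < 1 := by
  have h1 : ∀ᵐ x ∂(q j), x ∈ Set.Icc (0:ℝ) 1 := by
    rw [ae_iff]
    convert hq j using 2
    ext x; simp
  have h2 : q j {x | x ∈ Set.Icc (0:ℝ) 1 ∧ 1 ≤ z * x} = 0 := by
    rcases eq_or_lt_of_le hm.1 with hz | hz
    · convert measure_empty (μ := q j)
      ext x
      simp only [Set.mem_setOf_eq, Set.mem_empty_iff_false, iff_false]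
      rintro ⟨-, hx⟩
      rw [← hz] at hx
      simp at hx
      linarith
    · by_contra hSne
      set S : Set ℝ := {x | x ∈ Set.Icc (0:ℝ) 1 ∧ 1 ≤ z * x} with hS
      have hSm : MeasurableSet S := by
        apply (measurableSet_Icc).inter
        exact measurableSet_le measurable_const (measurable_const_mul z)
      have hterm : ∀ n : ℕ, ENNReal.ofReal (β j) * q j S ≤
          ENNReal.ofReal (z ^ n) * ∫⁻ x, ENNReal.ofReal (x ^ n * β j) ∂(q j) := by
        intro n
        have hSx : ∀ x ∈ S, ENNReal.ofReal ((1/z) ^ n * β j)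
            ≤ ENNReal.ofReal (x ^ n * β j) := by
          intro x hx
          apply ENNReal.ofReal_le_ofReal
          apply mul_le_mul_of_nonneg_right _ (hβ j).1.le
          apply pow_le_pow_left₀ (by positivity)
          rw [div_le_iff₀ hz, mul_comm]
          exact hx.2
        calc ENNReal.ofReal (β j) * q j S
            = ENNReal.ofReal (z ^ n) * (ENNReal.ofReal ((1/z) ^ n * β j) * q j S) := by
              rw [← mul_assoc, ← ENNReal.ofReal_mul (by positivity)]
              congr 2
              field_simp
              rw [one_div, inv_pow, mul_assoc, mul_inv_cancel₀ (pow_ne_zero _ hz.ne'), mul_one]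
          _ = ENNReal.ofReal (z ^ n) * ∫⁻ x in S, ENNReal.ofReal ((1/z) ^ n * β j) ∂(q j) := by
              rw [setLIntegral_const]
          _ ≤ ENNReal.ofReal (z ^ n) * ∫⁻ x in S, ENNReal.ofReal (x ^ n * β j) ∂(q j) := by
              exact mul_le_mul_right (setLIntegral_mono' hSm hSx) _
          _ ≤ ENNReal.ofReal (z ^ n) * ∫⁻ x, ENNReal.ofReal (x ^ n * β j) ∂(q j) := by
              exact mul_le_mul_right (setLIntegral_le_lintegral _ _) _
      have hne : ENNReal.ofReal (β j) * q j S ≠ 0 := by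
        apply mul_ne_zero
        · exact (ENNReal.ofReal_pos.mpr (hβ j).1).ne'
        · exact hSne
      have htop : (∑' _ : ℕ, ENNReal.ofReal (β j) * q j S) = ⊤ :=
        ENNReal.tsum_const_eq_top_of_ne_zero hne
      have hle := ENNReal.tsum_le_tsum hterm
      rw [htop] at hle
      exact absurd (lt_of_le_of_lt (top_le_iff.mp hle).ge (hm.2 j)) (lt_irrefl _)
  have h2' : ∀ᵐ x ∂(q j), x ∉ {x | x ∈ Set.Icc (0:ℝ) 1 ∧ 1 ≤ z * x} :=
    (measure_eq_zero_iff_ae_notMem (μ := q j)).mp h2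
  filter_upwards [h1, h2'] with x hx hx2
  refine ⟨hx.1, hx.2, ?_⟩
  by_contra hzx
  exact hx2 ⟨hx, le_of_not_gt hzx⟩

lemma integrable_inv [∀ i, IsProbabilityMeasure (q i)]
    (hβ : ∀ i, β i ∈ Set.Ioo (0:ℝ) 1) (hq : ∀ i, q i (Set.Icc (0:ℝ) 1)ᶜ = 0)
    (hm : memIm (m+1) β q z) (j : Fin (m+1)) :
    Integrable (fun x => β j / (1 - z * x)) (q j) := by
  have hmeas : Measurable (fun x : ℝ => β j / (1 - z * x)) := by fun_prop
  refine ⟨hmeas.aestronglyMeasurable, ?_⟩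
  rw [HasFiniteIntegral]
  have hgood := ae_good hβ hq hm j
  have hz0 : 0 ≤ z := hm.1
  calc ∫⁻ x, ‖β j / (1 - z * x)‖₊ ∂(q j)
      = ∫⁻ x, ∑' n : ℕ, ENNReal.ofReal (z ^ n) * ENNReal.ofReal (x ^ n * β j) ∂(q j) := by
        apply lintegral_congr_ae
        filter_upwards [hgood] with x ⟨hx0, hx1, hzx⟩
        have hzx0 : 0 ≤ z * x := mul_nonneg hz0 hx0
        have hpos : (0:ℝ) < 1 - z * x := by linarith
        have hfx : β j / (1 - z * x) = ∑' n : ℕ, β j * (z * x) ^ n := by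
          rw [tsum_mul_left, tsum_geometric_of_lt_one hzx0 hzx, div_eq_mul_inv]
        rw [← enorm_eq_nnnorm, Real.enorm_eq_ofReal (le_of_lt (div_pos (hβ j).1 hpos)), hfx,
          ENNReal.ofReal_tsum_of_nonneg
            (fun n => mul_nonneg (hβ j).1.le (pow_nonneg hzx0 n))
            ((summable_geometric_of_lt_one hzx0 hzx).mul_left _)]
        refine tsum_congr fun n => ?_
        rw [← ENNReal.ofReal_mul (pow_nonneg hz0 n)]
        congr 1
        rw [mul_pow]
        ring
    _ = ∑' n : ℕ, ∫⁻ x, ENNReal.ofReal (z ^ n) * ENNReal.ofReal (x ^ n * β j) ∂(q j) := by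
        apply lintegral_tsum
        intro n
        apply Measurable.aemeasurable
        fun_prop
    _ = ∑' n : ℕ, ENNReal.ofReal (z ^ n) * ∫⁻ x, ENNReal.ofReal (x ^ n * β j) ∂(q j) := by
        refine tsum_congr fun n => ?_
        exact lintegral_const_mul' _ _ ENNReal.ofReal_ne_top
    _ < ⊤ := hm.2 j

lemma integrable_pow [∀ i, IsProbabilityMeasure (q i)]
    (hβ : ∀ i, β i ∈ Set.Ioo (0:ℝ) 1) (hq : ∀ i, q i (Set.Icc (0:ℝ) 1)ᶜ = 0)
    (hm : memIm (m+1) β q z) (j : Fin (m+1)) (p : ℕ) :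
    Integrable (fun x => (z * x) ^ p / (1 - (z * x) ^ (m+1)) * β j) (q j) := by
  have hz0 : 0 ≤ z := hm.1
  apply (integrable_inv hβ hq hm j).mono (meas_pow z p (m+1) (β j)).aestronglyMeasurable
  filter_upwards [ae_good hβ hq hm j] with x ⟨hx0, hx1, hzx⟩
  have hzx0 : 0 ≤ z * x := mul_nonneg hz0 hx0
  have hk : (z * x) ^ (m+1) ≤ z * x := pow_le_of_le_one hzx0 hzx.le (Nat.succ_ne_zero m)
  have hd : (0:ℝ) < 1 - (z * x) ^ (m+1) := by
    have : (z * x) ^ (m+1) < 1 := pow_lt_one₀ hzx0 hzx (Nat.succ_ne_zero m)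
    linarith
  have hd2 : (0:ℝ) < 1 - z * x := by linarith
  have hnum : (z * x) ^ p ≤ 1 := pow_le_one₀ hzx0 hzx.le
  rw [Real.norm_eq_abs, Real.norm_eq_abs,
    abs_of_nonneg (mul_nonneg (div_nonneg (pow_nonneg hzx0 p) hd.le) (hβ j).1.le),
    abs_of_nonneg (div_nonneg (hβ j).1.le hd2.le)]
  calc (z * x) ^ p / (1 - (z * x) ^ (m+1)) * β j
      ≤ 1 / (1 - z * x) * β j := by
        apply mul_le_mul_of_nonneg_right _ (hβ j).1.le
        apply div_le_div₀ (by positivity) hnum hd2 (by linarith)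
    _ = β j / (1 - z * x) := by ring

lemma geom_aux (k : ℕ) (hk : 0 < k) {t : ℝ} (ht0 : 0 ≤ t) (ht1 : t < 1) :
    ∑ p : Fin k, t ^ (p : ℕ) / (1 - t ^ k) = 1 / (1 - t) := by
  have hS : (1:ℝ) ≤ ∑ i ∈ Finset.range k, t ^ i := by
    calc (1:ℝ) = t ^ 0 := by norm_num
    _ ≤ ∑ i ∈ Finset.range k, t ^ i := by
      apply Finset.single_le_sum (fun i _ => by positivity) (Finset.mem_range.mpr hk)
  have h1 : (1:ℝ) - t ^ k = (1 - t) * ∑ i ∈ Finset.range k, t ^ i := by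
    have := geom_sum_mul t k
    linarith [this]
  rw [Fin.sum_univ_eq_sum_range (fun p => t ^ p / (1 - t ^ k)), ← Finset.sum_div, h1]
  rw [div_eq_div_iff (by nlinarith) (by linarith)]
  ring

lemma colsum [∀ i, IsProbabilityMeasure (q i)]
    (hβ : ∀ i, β i ∈ Set.Ioo (0:ℝ) 1) (hq : ∀ i, q i (Set.Icc (0:ℝ) 1)ᶜ = 0)
    (hm : memIm (m+1) β q z) (j : Fin (m+1)) :
    ∑ i, Amat (m+1) β q z i j = rhoFun (m+1) β q z j := by
  have hz0 : 0 ≤ z := hm.1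
  have h1 : ∑ i : Fin (m+1), Amat (m+1) β q z i j
      = ∑ p : Fin (m+1), ∫ x, (z * x) ^ ((p : ℕ)) / (1 - (z * x) ^ (m+1)) * β j ∂(q j) :=
    Fintype.sum_equiv (Equiv.subRight j)
      (fun i => Amat (m+1) β q z i j)
      (fun p => ∫ x, (z * x) ^ ((p : ℕ)) / (1 - (z * x) ^ (m+1)) * β j ∂(q j))
      (fun i => rfl)
  rw [h1]
  rw [← integral_finset_sum Finset.univ
    (fun (p : Fin (m+1)) (_ : p ∈ Finset.univ) => integrable_pow hβ hq hm j (p : ℕ))]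
  apply integral_congr_ae
  filter_upwards [ae_good hβ hq hm j] with x ⟨hx0, hx1, hzx⟩
  rw [← Finset.sum_mul, geom_aux (m+1) (Nat.succ_pos m) (mul_nonneg hz0 hx0) hzx]
  rw [div_mul_eq_mul_div, one_mul]

lemma Amat_nonneg [∀ i, IsProbabilityMeasure (q i)]
    (hβ : ∀ i, β i ∈ Set.Ioo (0:ℝ) 1) (hq : ∀ i, q i (Set.Icc (0:ℝ) 1)ᶜ = 0)
    (hm : memIm (m+1) β q z) (i j : Fin (m+1)) :
    0 ≤ Amat (m+1) β q z i j := by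
  have hz0 : 0 ≤ z := hm.1
  simp only [Amat, Matrix.of_apply]
  apply integral_nonneg_of_ae
  filter_upwards [ae_good hβ hq hm j] with x ⟨hx0, hx1, hzx⟩
  have hzx0 : 0 ≤ z * x := mul_nonneg hz0 hx0
  have hd : (0:ℝ) < 1 - (z * x) ^ (m+1) := by
    have : (z * x) ^ (m+1) < 1 := pow_lt_one₀ hzx0 hzx (Nat.succ_ne_zero m)
    linarith
  exact mul_nonneg (div_nonneg (pow_nonneg hzx0 _) hd.le) (hβ j).1.le

lemma q_Ioi_pos [∀ i, IsProbabilityMeasure (q i)]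
    (hq : ∀ i, q i (Set.Icc (0:ℝ) 1)ᶜ = 0) (j : Fin (m+1))
    (hη : 0 < etaSup (q j)) : 0 < q j (Set.Ioi 0) := by
  by_contra hle
  push_neg at hle
  have h0 : q j (Set.Ioi (0:ℝ)) = 0 := le_antisymm hle zero_le
  revert h0
  intro h0
  have : etaSup (q j) ≤ 0 := by
    apply Real.sSup_le _ le_rfl
    rintro x ⟨hx, hqx⟩
    by_contra hx0
    push_neg at hx0
    have hsub : Set.Icc x 1 ⊆ Set.Ioi 0 := fun y hy => lt_of_lt_of_le hx0 hy.1
    have := measure_mono (μ := q j) hsub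
    rw [h0] at this
    exact absurd (le_antisymm this zero_le) hqx.ne'
  linarith

lemma Amat_pos [∀ i, IsProbabilityMeasure (q i)]
    (hβ : ∀ i, β i ∈ Set.Ioo (0:ℝ) 1) (hq : ∀ i, q i (Set.Icc (0:ℝ) 1)ᶜ = 0)
    (hm : memIm (m+1) β q z) (hz : 0 < z) (hη : ∀ i, 0 < etaSup (q i)) (i j : Fin (m+1)) :
    0 < Amat (m+1) β q z i j := by
  simp only [Amat, Matrix.of_apply]
  set p : ℕ := ((i - j : Fin (m+1)) : ℕ)
  set f : ℝ → ℝ := fun x => (z * x) ^ p / (1 - (z * x) ^ (m+1)) * β j with hf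
  have hae : 0 ≤ᵐ[q j] f := by
    filter_upwards [ae_good hβ hq hm j] with x ⟨hx0, hx1, hzx⟩
    have hzx0 : 0 ≤ z * x := mul_nonneg hz.le hx0
    have hd : (0:ℝ) < 1 - (z * x) ^ (m+1) := by
      have : (z * x) ^ (m+1) < 1 := pow_lt_one₀ hzx0 hzx (Nat.succ_ne_zero m)
      linarith
    simp only [hf]
    exact mul_nonneg (div_nonneg (pow_nonneg hzx0 _) hd.le) (hβ j).1.le
  rw [integral_pos_iff_support_of_nonneg_ae hae (integrable_pow hβ hq hm j p)]
  set G : Set ℝ := {x | 0 ≤ x ∧ x ≤ 1 ∧ z * x < 1} with hG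
  have hGc : q j Gᶜ = 0 := by
    have h := ae_iff.mp (ae_good hβ hq hm j)
    rw [hG, Set.compl_setOf]
    exact h
  have hsub : Set.Ioi (0:ℝ) ∩ G ⊆ Function.support f := by
    rintro x ⟨hx, hx0, hx1, hzx⟩
    have hzxp : 0 < z * x := mul_pos hz hx
    have hd : (0:ℝ) < 1 - (z * x) ^ (m+1) := by
      have : (z * x) ^ (m+1) < 1 :=
        pow_lt_one₀ (le_of_lt hzxp) hzx (Nat.succ_ne_zero m)
      linarith
    simp only [Function.mem_support, hf]
    exact (mul_pos (div_pos (pow_pos hzxp _) hd) (hβ j).1).ne'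
  have h1 : q j (Set.Ioi 0) ≤ q j (Function.support f) := by
    calc q j (Set.Ioi 0) ≤ q j ((Set.Ioi (0:ℝ) ∩ G) ∪ Gᶜ) := by
          apply measure_mono
          intro x hx
          by_cases hxG : x ∈ G
          · exact Or.inl ⟨hx, hxG⟩
          · exact Or.inr hxG
      _ ≤ q j (Set.Ioi (0:ℝ) ∩ G) + q j Gᶜ := measure_union_le _ _
      _ = q j (Set.Ioi (0:ℝ) ∩ G) := by rw [hGc, add_zero]
      _ ≤ q j (Function.support f) := measure_mono hsub
  exact lt_of_lt_of_le (q_Ioi_pos hq j (hη j)) h1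


lemma Amat_zero [∀ i, IsProbabilityMeasure (q i)] (hβ : ∀ i, β i ∈ Set.Ioo (0:ℝ) 1)
    (i j : Fin (m+1)) :
    Amat (m+1) β q 0 i j = if i = j then β j else 0 := by
  simp only [Amat, Matrix.of_apply, zero_mul]
  by_cases h : i = j
  · subst h
    rw [if_pos rfl]
    have h1 : ((i - i : Fin (m+1)) : ℕ) = 0 := by rw [sub_self]; rfl
    simp only [h1, pow_zero, zero_pow (Nat.succ_ne_zero m), sub_zero, div_one, one_mul]
    simp [integral_const]
  · rw [if_neg h]
    have h1 : ((i - j : Fin (m+1)) : ℕ) ≠ 0 := by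
      intro hc
      exact h (sub_eq_zero.mp (Fin.ext (by simpa using hc)))
    simp only [zero_pow h1, zero_div, zero_mul, integral_zero]

end MT


lemma ker_structure {k : ℕ} (A : Matrix (Fin (k+1)) (Fin (k+1)) ℝ) (U : Fin (k+1) → ℝ)
    (ρ : Fin (k+1) → ℝ) (α : ℝ) (B : Matrix (Fin (k+1)) (Fin (k+1)) ℝ)
    (hB : ∀ i j, B i j = A i j - (1 : Matrix (Fin (k+1)) (Fin (k+1)) ℝ) i j
      - ((k+1 : ℝ))⁻¹ * (ρ j - 1))
    (hA0 : ∀ i j, 0 ≤ A i j) (hU : ∀ i, 0 < U i)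
    (heq : ∀ i, A.mulVec U i + α = U i)
    (hcase : 0 < α ∨ (α = 0 ∧ ∀ i j, 0 < A i j))
    (v : Fin (k+1) → ℝ) (hv : B.mulVec v = 0) : ∃ s : ℝ, v = s • U := by
  classical
  set c : ℝ := ((k+1 : ℝ))⁻¹ * ∑ j, (ρ j - 1) * v j with hc
  have hAv : ∀ i, A.mulVec v i = v i + c := by
    intro i
    have h0 := congrFun hv i
    simp only [Matrix.mulVec, dotProduct, Pi.zero_apply] at h0 ⊢
    have hexp : ∑ j, B i j * v j
        = (∑ j, A i j * v j) - v i - c := by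
      rw [hc, Finset.mul_sum]
      rw [show (∑ j, B i j * v j)
          = ∑ j, (A i j * v j - (1 : Matrix (Fin (k+1)) (Fin (k+1)) ℝ) i j * v j
            - ((k+1 : ℝ))⁻¹ * ((ρ j - 1) * v j)) from by
        refine Finset.sum_congr rfl fun j _ => ?_
        rw [hB i j]; ring]
      rw [Finset.sum_sub_distrib, Finset.sum_sub_distrib]
      congr 1
      congr 1
      simp [Matrix.one_apply, Finset.sum_ite_eq' Finset.univ i (fun j => v j)]
    rw [hexp] at h0
    linarith
  -- max and min of v j / U j
  obtain ⟨i₀, -, hmax⟩ := Finset.exists_max_image Finset.univ (fun j => v j / U j)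
    ⟨0, Finset.mem_univ 0⟩
  obtain ⟨i₁, -, hmin⟩ := Finset.exists_min_image Finset.univ (fun j => v j / U j)
    ⟨0, Finset.mem_univ 0⟩
  set t : ℝ := v i₀ / U i₀ with ht
  set s : ℝ := v i₁ / U i₁ with hs
  have hvt : ∀ j, v j ≤ t * U j := by
    intro j
    have := hmax j (Finset.mem_univ j)
    calc v j = v j / U j * U j := by
          rw [div_mul_cancel₀ _ (hU j).ne']
    _ ≤ t * U j := by
      apply mul_le_mul_of_nonneg_right this (hU j).le
  have hvs : ∀ j, s * U j ≤ v j := by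
    intro j
    have := hmin j (Finset.mem_univ j)
    calc s * U j ≤ v j / U j * U j := by
          apply mul_le_mul_of_nonneg_right this (hU j).le
    _ = v j := by rw [div_mul_cancel₀ _ (hU j).ne']
  have hti : v i₀ = t * U i₀ := by rw [ht, div_mul_cancel₀ _ (hU i₀).ne']
  have hsi : v i₁ = s * U i₁ := by rw [hs, div_mul_cancel₀ _ (hU i₁).ne']
  have hAU : ∀ i, A.mulVec U i = U i - α := fun i => by have := heq i; linarith
  have hct : c ≤ -(t * α) := by
    have h1 : A.mulVec v i₀ ≤ t * (U i₀ - α) := by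
      have : A.mulVec v i₀ ≤ A.mulVec (fun j => t * U j) i₀ := by
        simp only [Matrix.mulVec, dotProduct]
        exact Finset.sum_le_sum fun j _ =>
          mul_le_mul_of_nonneg_left (hvt j) (hA0 i₀ j)
      have h2 : A.mulVec (fun j => t * U j) i₀ = t * (U i₀ - α) := by
        simp only [Matrix.mulVec, dotProduct] at this ⊢
        rw [show (∑ j, A i₀ j * (t * U j)) = t * ∑ j, A i₀ j * U j from by
          rw [Finset.mul_sum]; exact Finset.sum_congr rfl fun j _ => by ring]
        have := hAU i₀
        simp only [Matrix.mulVec, dotProduct] at this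
        rw [this]
      linarith
    have := hAv i₀
    rw [hti] at this
    linarith
  have hcs : -(s * α) ≤ c := by
    have h1 : s * (U i₁ - α) ≤ A.mulVec v i₁ := by
      have h3 : A.mulVec (fun j => s * U j) i₁ ≤ A.mulVec v i₁ := by
        simp only [Matrix.mulVec, dotProduct]
        exact Finset.sum_le_sum fun j _ =>
          mul_le_mul_of_nonneg_left (hvs j) (hA0 i₁ j)
      have h2 : A.mulVec (fun j => s * U j) i₁ = s * (U i₁ - α) := by
        simp only [Matrix.mulVec, dotProduct]
        rw [show (∑ j, A i₁ j * (s * U j)) = s * ∑ j, A i₁ j * U j from by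
          rw [Finset.mul_sum]; exact Finset.sum_congr rfl fun j _ => by ring]
        have := hAU i₁
        simp only [Matrix.mulVec, dotProduct] at this
        rw [this]
      linarith
    have := hAv i₁
    rw [hsi] at this
    linarith
  have hst : s ≤ t := hmax i₁ (Finset.mem_univ i₁)
  rcases hcase with hα | ⟨hα0, hApos⟩
  · -- α > 0 : t ≤ s hence t = s and v = t • U
    have hts : t ≤ s := by nlinarith
    have hts' : t = s := le_antisymm hts hst
    refine ⟨t, funext fun j => ?_⟩
    have := hvt j
    have := hvs j
    simp only [Pi.smul_apply, smul_eq_mul]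
    rw [hts'] at *
    linarith [hvt j, hvs j]
  · -- α = 0
    have hc0 : c = 0 := by rw [hα0] at hct hcs; simp at hct hcs; linarith
    have hAvv : ∀ i, A.mulVec v i = v i := fun i => by rw [hAv i, hc0, add_zero]
    set w : Fin (k+1) → ℝ := fun j => v j - s * U j with hw
    have hw0 : ∀ j, 0 ≤ w j := fun j => by simp [hw]; linarith [hvs j]
    have hwi : w i₁ = 0 := by simp [hw]; linarith [hsi]
    have hAw : A.mulVec w i₁ = 0 := by
      have : A.mulVec w i₁ = A.mulVec v i₁ - s * A.mulVec U i₁ := by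
        simp only [Matrix.mulVec, dotProduct, hw, Finset.mul_sum,
          ← Finset.sum_sub_distrib]
        exact Finset.sum_congr rfl fun j _ => by ring
      rw [this, hAvv i₁, hAU i₁, hα0] at *
      linarith [hsi]
    have hterm : ∀ j ∈ Finset.univ, A i₁ j * w j = 0 := by
      rw [show A.mulVec w i₁ = ∑ j, A i₁ j * w j from rfl] at hAw
      exact (Finset.sum_eq_zero_iff_of_nonneg fun j _ =>
        mul_nonneg (hA0 i₁ j) (hw0 j)).mp hAw
    have hwz : ∀ j, w j = 0 := by
      intro j
      have := hterm j (Finset.mem_univ j)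
      have hpos := hApos i₁ j
      rcases mul_eq_zero.mp this with h | h
      · exact absurd h (ne_of_gt hpos)
      · exact h
    refine ⟨s, funext fun j => ?_⟩
    have := hwz j
    simp only [hw] at this
    simp only [Pi.smul_apply, smul_eq_mul]
    linarith

lemma main_la {k : ℕ} (B : Matrix (Fin (k+1)) (Fin (k+1)) ℝ) (U : Fin (k+1) → ℝ)
    (hcol : ∀ j, ∑ i, B i j = 0)
    (hBU : B.mulVec U = 0)
    (hU0 : U 0 = 1)
    (hker : ∀ v, B.mulVec v = 0 → ∃ s : ℝ, v = s • U)
    (N : Fin (k+1) → ℝ)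
    (hN : ∀ j, N j = (B.submatrix j.succAbove j.succAbove).det) :
    N 0 ≠ 0 ∧ ∀ j, N j = N 0 * U j := by
  classical
  have hUne : U ≠ 0 := by
    intro h; rw [h] at hU0; simp at hU0
  -- (a) N 0 ≠ 0
  have hN0 : N 0 ≠ 0 := by
    rw [hN 0]
    intro hdet
    obtain ⟨v, hvne, hv⟩ := (Matrix.exists_mulVec_eq_zero_iff).mpr hdet
    set vt : Fin (k+1) → ℝ := Fin.cons 0 v with hvt
    have hcomp : ∀ i' : Fin k, B.mulVec vt (Fin.succ i') = 0 := by
      intro i'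
      have := congrFun hv i'
      simp only [Matrix.mulVec, dotProduct, Pi.zero_apply,
        Matrix.submatrix_apply, Fin.succAbove_zero] at this ⊢
      rw [Fin.sum_univ_succ]
      simpa [hvt] using this
    have hsum : ∑ i, B.mulVec vt i = 0 := by
      simp only [Matrix.mulVec, dotProduct]
      rw [Finset.sum_comm]
      simp only [← Finset.sum_mul, hcol, zero_mul, Finset.sum_const_zero]
    have hzero : B.mulVec vt 0 = 0 := by
      rw [Fin.sum_univ_succ] at hsum
      have : ∑ i' : Fin k, B.mulVec vt (Fin.succ i') = 0 :=
        Finset.sum_eq_zero fun i' _ => hcomp i'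
      rw [this, add_zero] at hsum
      exact hsum
    have hBvt : B.mulVec vt = 0 := by
      funext i
      refine Fin.cases ?_ ?_ i
      · exact hzero
      · exact hcomp
    obtain ⟨s, hsv⟩ := hker vt hBvt
    have hs0 : s = 0 := by
      have := congrFun hsv 0
      simp [hvt, hU0] at this
      exact this.symm
    apply hvne
    funext j'
    have := congrFun hsv (Fin.succ j')
    simp [hvt, hs0] at this
    exact this
  -- (b) det B = 0
  have hdetB : B.det = 0 := by
    rw [← Matrix.exists_mulVec_eq_zero_iff]
    exact ⟨U, hUne, hBU⟩
  -- (c) columns of adjugate are multiples of U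
  have hcols : ∀ j, ∃ t : ℝ, (fun i => B.adjugate i j) = t • U := by
    intro j
    apply hker
    funext i
    have : (B * B.adjugate) i j = 0 := by
      rw [Matrix.mul_adjugate, hdetB]; simp
    simpa [Matrix.mul_apply, Matrix.mulVec, dotProduct] using this
  -- (d) left kernel is spanned by ones
  have hkerEq : LinearMap.ker B.mulVecLin = Submodule.span ℝ {U} := by
    apply le_antisymm
    · intro v hv
      obtain ⟨s, hs⟩ := hker v (by simpa [Matrix.mulVecLin_apply] using hv)
      exact Submodule.mem_span_singleton.mpr ⟨s, hs.symm⟩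
    · rw [Submodule.span_le, Set.singleton_subset_iff]
      simpa [LinearMap.mem_ker, Matrix.mulVecLin_apply] using hBU
  have hfr : Module.finrank ℝ (LinearMap.ker B.mulVecLin) = 1 := by
    rw [hkerEq]; exact finrank_span_singleton hUne
  have hrn := LinearMap.finrank_range_add_finrank_ker B.mulVecLin
  have hrnT := LinearMap.finrank_range_add_finrank_ker Bᵀ.mulVecLin
  have hrT : Bᵀ.rank = B.rank := Matrix.rank_transpose B
  have hfrT : Module.finrank ℝ (LinearMap.ker Bᵀ.mulVecLin) = 1 := by
    rw [Matrix.rank] at hrT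
    rw [Matrix.rank] at hrT
    rw [Module.finrank_pi] at hrn hrnT
    simp only [Fintype.card_fin] at hrn hrnT
    omega
  have hones : (fun _ => (1:ℝ)) ∈ LinearMap.ker Bᵀ.mulVecLin := by
    simp only [LinearMap.mem_ker, Matrix.mulVecLin_apply]
    funext i
    simp only [Matrix.mulVec, dotProduct, Matrix.transpose_apply, mul_one,
      Pi.zero_apply]
    exact hcol i
  have honesne : (fun _ => (1:ℝ)) ≠ (0 : Fin (k+1) → ℝ) := by
    intro h
    have := congrFun h 0
    simp at this
  have hkerT : LinearMap.ker Bᵀ.mulVecLin = Submodule.span ℝ {(fun _ => (1:ℝ))} := by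
    symm
    apply Submodule.eq_of_le_of_finrank_eq
    · rw [Submodule.span_le, Set.singleton_subset_iff]; exact hones
    · rw [hfrT, finrank_span_singleton honesne]
  -- (e) rows of adjugate are constants
  have hrows : ∀ i, ∃ a : ℝ, ∀ l, B.adjugate i l = a := by
    intro i
    have hmem : (fun l => B.adjugate i l) ∈ LinearMap.ker Bᵀ.mulVecLin := by
      simp only [LinearMap.mem_ker, Matrix.mulVecLin_apply]
      funext j
      have : (B.adjugate * B) i j = 0 := by
        rw [Matrix.adjugate_mul, hdetB]; simp
      simp only [Matrix.mul_apply] at this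
      simp only [Matrix.mulVec, dotProduct, Matrix.transpose_apply, Pi.zero_apply]
      rw [← this]
      exact Finset.sum_congr rfl fun l _ => mul_comm _ _
    rw [hkerT] at hmem
    obtain ⟨a, ha⟩ := Submodule.mem_span_singleton.mp hmem
    exact ⟨a, fun l => by
      have := congrFun ha l
      simp at this
      exact this.symm⟩
  -- (f) adjugate B i j = a₀ * U i
  obtain ⟨a₀, ha₀⟩ := hrows 0
  have hadj : ∀ i j, B.adjugate i j = a₀ * U i := by
    intro i j
    obtain ⟨t, ht⟩ := hcols j
    have h1 : B.adjugate i j = t * U i := by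
      have := congrFun ht i
      simpa using this
    have h2 : B.adjugate 0 j = t * U 0 := by
      have := congrFun ht 0
      simpa using this
    rw [ha₀ j, hU0, mul_one] at h2
    rw [h1, ← h2]
  -- (g) diagonal of adjugate equals N
  have hdiag : ∀ j, B.adjugate j j = N j := by
    intro j
    rw [hN j, Matrix.adjugate_fin_succ_eq_det_submatrix]
    have : ((-1 : ℝ)) ^ ((j : ℕ) + (j : ℕ)) = 1 := by
      rw [← two_mul, pow_mul]
      norm_num
    rw [this, one_mul]
  have hNj : ∀ j, N j = a₀ * U j := fun j => by rw [← hdiag j, hadj j j]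
  have hN00 : N 0 = a₀ := by rw [hNj 0, hU0, mul_one]
  exact ⟨hN0, fun j => by rw [hNj j, hN00]⟩


/-- With `B(z_c) = A(z_c) − I − (1/k)(ρ_j(z_c) − 1)_{i,j}` and `N j` the
`(j,j)`-minor of `B(z_c)`, one has `N₀ ≠ 0`, `U j = N j / N₀` for each `j`, and
`α = (1/k) ∑_j (N j / N₀)(1 − ρ_j(z_c))`.  Here `(z_c, U, α)` is the solution of the
dichotomy: if `1/η₀ ∈ I_μ` and `det (I − A(1/η₀)) > 0` then `z_c = 1/η₀` and `α > 0`;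
otherwise `z_c ∈ I_μ` and `α = 0`; in both cases `U` has positive coordinates, `U₀ = 1`
and `A(z_c) U + α·𝟏 = U`.  (We write `k = m + 1`.) -/
theorem stmt_4 (m : ℕ) (β : Fin (m + 1) → ℝ) (q : Fin (m + 1) → Measure ℝ)
    [∀ i, IsProbabilityMeasure (q i)] (p₀ : Measure ℝ) [IsProbabilityMeasure p₀]
    (hβ : ∀ i, β i ∈ Set.Ioo (0:ℝ) 1)
    (hq : ∀ i, q i (Set.Icc (0:ℝ) 1)ᶜ = 0) (hp₀ : p₀ (Set.Icc (0:ℝ) 1)ᶜ = 0)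
    (hη : ∀ i, 0 < etaSup (q i) ∧ etaSup (q i) ≤ etaSup p₀)
    (z_c α : ℝ) (U : Fin (m + 1) → ℝ)
    (hU : ∀ i, 0 < U i) (hU0 : U 0 = 1)
    (heq : ∀ i, (Amat (m + 1) β q z_c).mulVec U i + α = U i)
    (hcase1 : (memIm (m + 1) β q (1 / etaSup p₀) ∧
        0 < (1 - Amat (m + 1) β q (1 / etaSup p₀)).det) →
      z_c = 1 / etaSup p₀ ∧ 0 < α)
    (hcase2 : ¬ (memIm (m + 1) β q (1 / etaSup p₀) ∧
        0 < (1 - Amat (m + 1) β q (1 / etaSup p₀)).det) →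
      memIm (m + 1) β q z_c ∧ α = 0)
    (Bm : Matrix (Fin (m + 1)) (Fin (m + 1)) ℝ)
    (hB : Bm = Amat (m + 1) β q z_c - 1
      - ((m + 1 : ℝ))⁻¹ • Matrix.of (fun _ j => rhoFun (m + 1) β q z_c j - 1))
    (N : Fin (m + 1) → ℝ)
    (hN : ∀ j, N j = (Bm.submatrix j.succAbove j.succAbove).det) :
    N 0 ≠ 0 ∧ (∀ j, U j = N j / N 0) ∧
      α = ((m + 1 : ℝ))⁻¹ * ∑ j, (N j / N 0) * (1 - rhoFun (m + 1) β q z_c j) := by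
  classical
  have hmem : memIm (m + 1) β q z_c := by
    by_cases h : memIm (m + 1) β q (1 / etaSup p₀) ∧
        0 < (1 - Amat (m + 1) β q (1 / etaSup p₀)).det
    · obtain ⟨hz, -⟩ := hcase1 h
      rw [hz]; exact h.1
    · exact (hcase2 h).1
  have hz0 : 0 ≤ z_c := hmem.1
  have hαor : 0 < α ∨ (α = 0 ∧ ∀ i j, 0 < Amat (m+1) β q z_c i j) := by
    by_cases h : memIm (m + 1) β q (1 / etaSup p₀) ∧
        0 < (1 - Amat (m + 1) β q (1 / etaSup p₀)).det
    · exact Or.inl (hcase1 h).2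
    · right
      have hα0 := (hcase2 h).2
      have hzpos : 0 < z_c := by
        rcases lt_or_eq_of_le hz0 with h' | h'
        · exact h'
        · exfalso
          have hzz : z_c = 0 := h'.symm
          have hv : (Amat (m+1) β q z_c).mulVec U 0 = β 0 * U 0 := by
            show ∑ b, Amat (m+1) β q z_c 0 b * U b = β 0 * U 0
            rw [Finset.sum_eq_single 0]
            · rw [hzz, Amat_zero hβ 0 0, if_pos rfl]
            · intro b _ hb
              rw [hzz, Amat_zero hβ 0 b, if_neg (fun hh => hb hh.symm), zero_mul]
            · intro hu; exact absurd (Finset.mem_univ _) hu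
          have hh := heq 0
          rw [hv, hα0, add_zero, hU0, mul_one] at hh
          exact absurd hh (ne_of_lt (hβ 0).2)
      exact ⟨hα0, fun i j => Amat_pos hβ hq hmem hzpos (fun i => (hη i).1) i j⟩
  set ρ : Fin (m+1) → ℝ := fun j => rhoFun (m+1) β q z_c j with hρ
  have hBentry : ∀ i j, Bm i j = Amat (m+1) β q z_c i j
      - (1 : Matrix (Fin (m+1)) (Fin (m+1)) ℝ) i j - ((m+1:ℝ))⁻¹ * (ρ j - 1) := by
    intro i j
    rw [hB]
    simp [Matrix.sub_apply, Matrix.smul_apply, smul_eq_mul, hρ]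
  have hcolA : ∀ j, ∑ i, Amat (m+1) β q z_c i j = ρ j := fun j => colsum hβ hq hmem j
  have hmne : ((m:ℝ)+1) ≠ 0 := by positivity
  have hBcol : ∀ j, ∑ i, Bm i j = 0 := by
    intro j
    have hsplit : ∑ i, Bm i j
        = (∑ i, Amat (m+1) β q z_c i j)
          - (∑ i : Fin (m+1), (1 : Matrix (Fin (m+1)) (Fin (m+1)) ℝ) i j)
          - (∑ _i : Fin (m+1), ((m+1:ℝ))⁻¹ * (ρ j - 1)) := by
      rw [← Finset.sum_sub_distrib, ← Finset.sum_sub_distrib]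
      exact Finset.sum_congr rfl fun i _ => by rw [hBentry i j]
    have hone : ∑ i : Fin (m+1), (1 : Matrix (Fin (m+1)) (Fin (m+1)) ℝ) i j = 1 := by
      simp [Matrix.one_apply]
    have hconst : ∑ _i : Fin (m+1), ((m+1:ℝ))⁻¹ * (ρ j - 1) = ρ j - 1 := by
      rw [Finset.sum_const, Finset.card_univ, Fintype.card_fin, nsmul_eq_mul]
      push_cast
      rw [← mul_assoc, mul_inv_cancel₀ hmne, one_mul]
    rw [hsplit, hcolA j, hone, hconst]
    ring
  have hBUc : ∀ i, Bm.mulVec U i = -α - ((m+1:ℝ))⁻¹ * ∑ j, (ρ j - 1) * U j := by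
    intro i
    have hAU : (Amat (m+1) β q z_c).mulVec U i = U i - α := by
      have := heq i; linarith
    have h1 : Bm.mulVec U i = ∑ j, (Amat (m+1) β q z_c i j * U j
        - (1 : Matrix (Fin (m+1)) (Fin (m+1)) ℝ) i j * U j
        - ((m+1:ℝ))⁻¹ * ((ρ j - 1) * U j)) := by
      show ∑ j, Bm i j * U j = _
      exact Finset.sum_congr rfl fun j _ => by rw [hBentry i j]; ring
    rw [h1, Finset.sum_sub_distrib, Finset.sum_sub_distrib, ← Finset.mul_sum]
    have h2 : ∑ j, (1 : Matrix (Fin (m+1)) (Fin (m+1)) ℝ) i j * U j = U i := by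
      simp [Matrix.one_apply]
    have h3 : ∑ j, Amat (m+1) β q z_c i j * U j = U i - α := hAU
    rw [h2, h3]
    ring
  have hkey : -α - ((m+1:ℝ))⁻¹ * ∑ j, (ρ j - 1) * U j = 0 := by
    have hsum : ∑ i, Bm.mulVec U i = 0 := by
      have e1 : ∑ i, Bm.mulVec U i = ∑ j, (∑ i, Bm i j) * U j := by
        show ∑ i, ∑ j, Bm i j * U j = _
        rw [Finset.sum_comm]
        exact Finset.sum_congr rfl fun j _ => (Finset.sum_mul _ _ _).symm
      rw [e1]
      exact Finset.sum_eq_zero fun j _ => by rw [hBcol j, zero_mul]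
    have e2 : ∑ i : Fin (m+1), (-α - ((m+1:ℝ))⁻¹ * ∑ j, (ρ j - 1) * U j) = 0 := by
      rw [← hsum]
      exact Finset.sum_congr rfl fun i _ => (hBUc i).symm
    rw [Finset.sum_const, Finset.card_univ, Fintype.card_fin, nsmul_eq_mul] at e2
    push_cast at e2
    rcases mul_eq_zero.mp e2 with h | h
    · exact absurd h hmne
    · exact h
  have hBU : Bm.mulVec U = 0 := by
    funext i
    show Bm.mulVec U i = 0
    rw [hBUc i]
    exact hkey
  have hker : ∀ v, Bm.mulVec v = 0 → ∃ s : ℝ, v = s • U :=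
    fun v hv => ker_structure (Amat (m+1) β q z_c) U ρ α Bm hBentry
      (fun i j => Amat_nonneg hβ hq hmem i j) hU heq hαor v hv
  obtain ⟨hN0, hNj⟩ := main_la Bm U hBcol hBU hU0 hker N hN
  have hUj : ∀ j, U j = N j / N 0 := by
    intro j
    rw [hNj j, mul_comm, mul_div_assoc, div_self hN0, mul_one]
  refine ⟨hN0, hUj, ?_⟩
  have hα : α = ((m+1:ℝ))⁻¹ * ∑ j, (1 - ρ j) * U j := by
    have hsums : (∑ j, (1 - ρ j) * U j) + ∑ j, (ρ j - 1) * U j = 0 := by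
      rw [← Finset.sum_add_distrib]
      exact Finset.sum_eq_zero fun j _ => by ring
    have hS : ∑ j, (1 - ρ j) * U j = - ∑ j, (ρ j - 1) * U j := by linarith
    rw [hS, mul_neg]
    linarith
  rw [hα]
  congr 1
  refine Finset.sum_congr rfl fun j _ => ?_
  rw [← hUj j]
  ring
end
end

section
/- The limits w̄_i := lim_{n→∞} w_{kn+i} of the mean fitness subsequences satisfy the bound η₀^k · Π_{i∈K} (1 − β_i)/w̄_i ≤ 1. -/
open MeasureTheory Matrix Filter

noncomputable section

/-- Convergence in total variation on a set `s ⊆ ℝ`: for all `ε > 0`, eventually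
`|p_n(A) − π(A)| < ε` uniformly over measurable subsets `A ⊆ s`. -/
def TVConvOn (p : ℕ → Measure ℝ) (π : Measure ℝ) (s : Set ℝ) : Prop :=
  ∀ ε : ℝ, 0 < ε → ∃ N : ℕ, ∀ n ≥ N, ∀ A : Set ℝ, MeasurableSet A → A ⊆ s →
    |((p n) A).toReal - (π A).toReal| < ε

/-- Weak convergence of measures (supported in a compact interval): convergence of integrals of
continuous test functions. -/
def WeakConv (p : ℕ → Measure ℝ) (π : Measure ℝ) : Prop :=
  ∀ f : ℝ → ℝ, Continuous f →
    Tendsto (fun n => ∫ x, f x ∂(p n)) atTop (nhds (∫ x, f x ∂π))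

open Fin.NatCast in
/-- Kingman's periodic recursion:
`p_{n+1}(dx) = β_{[n+1]} q_{[n+1]}(dx) + (1 − β_{[n+1]}) x p_n(dx) / w_n`,
where `w n = ∫ x p_n(dx)`. -/
def KingmanRec (k : ℕ) [NeZero k] (β : Fin k → ℝ) (q : Fin k → Measure ℝ)
    (p : ℕ → Measure ℝ) (w : ℕ → ℝ) : Prop :=
  (∀ n, w n = ∫ x, x ∂(p n)) ∧
  ∀ n : ℕ, p (n + 1) = ENNReal.ofReal (β ((n + 1 : ℕ) : Fin k)) • q ((n + 1 : ℕ) : Fin k)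
    + (p n).withDensity fun x => ENNReal.ofReal ((1 - β ((n + 1 : ℕ) : Fin k)) * x / w n)

open Fin.NatCast in
/-- The limits `w̄_i := lim_n w_{kn+i}` of the mean fitness subsequences satisfy
`η₀^k · ∏_{i∈K} (1 − β_i)/w̄_i ≤ 1`. -/
theorem stmt_9 (k : ℕ) [NeZero k] (β : Fin k → ℝ) (q : Fin k → Measure ℝ)
    [∀ i, IsProbabilityMeasure (q i)]
    (p₀ : Measure ℝ) [IsProbabilityMeasure p₀]
    (hβ : ∀ i, β i ∈ Set.Ioo (0:ℝ) 1)
    (hq : ∀ i, q i (Set.Icc (0:ℝ) 1)ᶜ = 0) (hp₀ : p₀ (Set.Icc (0:ℝ) 1)ᶜ = 0)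
    (hη : ∀ i, 0 < etaSup (q i) ∧ etaSup (q i) ≤ etaSup p₀)
    (p : ℕ → Measure ℝ) (w : ℕ → ℝ)
    (hp0 : p 0 = p₀) (hrec : KingmanRec k β q p w)
    (wbar : Fin k → ℝ)
    (hconv : ∀ i : Fin k, Tendsto (fun n => w (k * n + (i : ℕ))) atTop (nhds (wbar i))) :
    etaSup p₀ ^ k * ∏ i, (1 - β i) / wbar i ≤ 1 := by
  obtain ⟨hw, hrec2⟩ := hrec
  have hk : 0 < k := Nat.pos_of_ne_zero (NeZero.ne k)
  have i0 : Fin k := ⟨0, hk⟩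
  have hηpos : 0 < etaSup p₀ := lt_of_lt_of_le (hη i0).1 (hη i0).2
  -- supports
  have hsupp : ∀ n, p n (Set.Icc (0:ℝ) 1)ᶜ = 0 := by
    intro n
    induction n with
    | zero => rw [hp0]; exact hp₀
    | succ n ih =>
      rw [hrec2 n, Measure.add_apply, Measure.smul_apply, smul_eq_mul, hq, mul_zero,
        zero_add, withDensity_apply _ measurableSet_Icc.compl,
        setLIntegral_measure_zero _ _ ih]
  have hae : ∀ n, ∀ᵐ x ∂(p n), x ∈ Set.Icc (0:ℝ) 1 := by
    intro n
    rw [ae_iff]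
    convert hsupp n using 2
    rfl
  have hInt : ∀ n, IsProbabilityMeasure (p n) → Integrable (fun x : ℝ => x) (p n) := by
    intro n hPn
    refine Integrable.mono' (integrable_const 1) measurable_id.aestronglyMeasurable ?_
    filter_upwards [hae n] with x hx
    rw [Real.norm_eq_abs, abs_le]
    exact ⟨le_trans (by norm_num) hx.1, hx.2⟩
  have hwnonneg : ∀ n, 0 ≤ w n := by
    intro n
    rw [hw n]
    refine integral_nonneg_of_ae ?_
    filter_upwards [hae n] with x hx using hx.1
  have hwbar_nonneg : ∀ i, 0 ≤ wbar i :=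
    fun i => ge_of_tendsto' (hconv i) (fun n => hwnonneg _)
  by_cases hwb : ∀ i, 0 < wbar i
  swap
  · -- some wbar i = 0, product is 0
    push_neg at hwb
    obtain ⟨i, hi⟩ := hwb
    have hi0 : wbar i = 0 := le_antisymm hi (hwbar_nonneg i)
    have : (∏ j, (1 - β j) / wbar j) = 0 :=
      Finset.prod_eq_zero (Finset.mem_univ i) (by rw [hi0, div_zero])
    rw [this, mul_zero]
    norm_num
  -- main case
  have key : ∀ a : ℝ, 0 < a → a < etaSup p₀ →
      a ^ k * ∏ i, (1 - β i) / wbar i ≤ 1 := by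
    intro a ha0 haη
    have hSne : {x | x ∈ Set.Icc (0:ℝ) 1 ∧ 0 < p₀ (Set.Icc x 1)}.Nonempty := by
      by_contra h
      rw [Set.not_nonempty_iff_eq_empty] at h
      rw [etaSup, h, Real.sSup_empty] at haη
      linarith
    have hbase : 0 < p₀ (Set.Icc a 1) := by
      obtain ⟨y, hyS, hay⟩ := exists_lt_of_lt_csSup hSne haη
      exact lt_of_lt_of_le hyS.2 (measure_mono (Set.Icc_subset_Icc hay.le le_rfl))
    -- lower bound on w n from mass on [a,1]
    have hwlow : ∀ n, IsProbabilityMeasure (p n) →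
        a * (p n (Set.Icc a 1)).toReal ≤ w n := by
      intro n hPn
      rw [hw n]
      have hIind : Integrable ((Set.Icc a 1).indicator fun _ : ℝ => a) (p n) :=
        (integrable_const a).indicator measurableSet_Icc
      have hle : ((Set.Icc a 1).indicator fun _ : ℝ => a) ≤ᵐ[p n] fun x => x := by
        filter_upwards [hae n] with x hx
        by_cases hxa : x ∈ Set.Icc a 1
        · rw [Set.indicator_of_mem hxa]; exact hxa.1
        · rw [Set.indicator_of_notMem hxa]; exact hx.1
      have := integral_mono_ae hIind (hInt n hPn) hle
      rwa [integral_indicator_const _ measurableSet_Icc, smul_eq_mul, mul_comm] at this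
    have hwpos : ∀ n, IsProbabilityMeasure (p n) → 0 < p n (Set.Icc a 1) → 0 < w n := by
      intro n hPn hm
      have hmR : 0 < (p n (Set.Icc a 1)).toReal :=
        ENNReal.toReal_pos hm.ne' (measure_ne_top _ _)
      exact lt_of_lt_of_le (by positivity) (hwlow n hPn)
    -- one-step lower bound on the mass of [a,1]
    have hstep : ∀ n, 0 < w n →
        ENNReal.ofReal ((1 - β ((n + 1 : ℕ) : Fin k)) * a / w n) * p n (Set.Icc a 1)
          ≤ p (n + 1) (Set.Icc a 1) := by
      intro n hwn
      set β' := β ((n + 1 : ℕ) : Fin k) with hβ'def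
      have hβ' : β' ∈ Set.Ioo (0:ℝ) 1 := hβ _
      rw [hrec2 n, Measure.add_apply, withDensity_apply _ measurableSet_Icc]
      refine le_trans ?_ le_add_self
      calc ENNReal.ofReal ((1 - β') * a / w n) * p n (Set.Icc a 1)
          = ∫⁻ _ in Set.Icc a 1, ENNReal.ofReal ((1 - β') * a / w n) ∂(p n) := by
            rw [setLIntegral_const]
        _ ≤ ∫⁻ x in Set.Icc a 1, ENNReal.ofReal ((1 - β') * x / w n) ∂(p n) := by
            refine setLIntegral_mono (ENNReal.measurable_ofReal.comp (by fun_prop)) ?_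
            intro x hx
            apply ENNReal.ofReal_le_ofReal
            gcongr
            · linarith [hβ'.2]
            · exact hx.1
    -- joint induction: probability & positive mass on [a,1]
    have main : ∀ n, IsProbabilityMeasure (p n) ∧ 0 < p n (Set.Icc a 1) := by
      intro n
      induction n with
      | zero =>
        rw [hp0]
        exact ⟨inferInstance, hbase⟩
      | succ n ih =>
        obtain ⟨ihP, ihm⟩ := ih
        set β' := β ((n + 1 : ℕ) : Fin k) with hβ'def
        have hβ' : β' ∈ Set.Ioo (0:ℝ) 1 := hβ _
        have hwn : 0 < w n := hwpos n ihP ihm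
        have hlin : ∫⁻ x, ENNReal.ofReal ((1 - β') * x / w n) ∂(p n)
            = ENNReal.ofReal (1 - β') := by
          have hrw : ∀ x : ℝ, (1 - β') * x / w n = ((1 - β') / w n) * x := by
            intro x; ring
          have hc : (0:ℝ) ≤ (1 - β') / w n := by
            apply div_nonneg (by linarith [hβ'.2]) hwn.le
          calc ∫⁻ x, ENNReal.ofReal ((1 - β') * x / w n) ∂(p n)
              = ∫⁻ x, ENNReal.ofReal ((1 - β') / w n) * ENNReal.ofReal x ∂(p n) := by
                simp_rw [hrw, ENNReal.ofReal_mul hc]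
            _ = ENNReal.ofReal ((1 - β') / w n) * ∫⁻ x, ENNReal.ofReal x ∂(p n) := by
                rw [lintegral_const_mul _ ENNReal.measurable_ofReal]
            _ = ENNReal.ofReal ((1 - β') / w n) * ENNReal.ofReal (w n) := by
                rw [← ofReal_integral_eq_lintegral_ofReal (hInt n ihP)
                  (by filter_upwards [hae n] with x hx using hx.1), ← hw n]
            _ = ENNReal.ofReal ((1 - β') / w n * w n) := by
                rw [ENNReal.ofReal_mul hc]
            _ = ENNReal.ofReal (1 - β') := by
                rw [div_mul_cancel₀ _ hwn.ne']
        have hprob : IsProbabilityMeasure (p (n + 1)) := by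
          constructor
          rw [hrec2 n, Measure.add_apply, Measure.smul_apply, smul_eq_mul,
            measure_univ, mul_one, withDensity_apply _ MeasurableSet.univ,
            Measure.restrict_univ, hlin, ← ENNReal.ofReal_add hβ'.1.le (by linarith [hβ'.2])]
          norm_num
        refine ⟨hprob, lt_of_lt_of_le ?_ (hstep n hwn)⟩
        exact ENNReal.mul_pos (ENNReal.ofReal_pos.mpr (div_pos (mul_pos
          (by linarith [hβ'.2]) ha0) hwn)).ne' ihm.ne'
    -- now the contradiction argument
    by_contra hCL
    push_neg at hCL
    set C := a ^ k * ∏ i, (1 - β i) / wbar i with hCdef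
    set m : ℕ → ℝ := fun n => (p n (Set.Icc a 1)).toReal with hmdef
    have hmpos : ∀ n, 0 < m n := by
      intro n
      haveI := (main n).1
      exact ENNReal.toReal_pos (main n).2.ne' (measure_ne_top _ _)
    have hmle1 : ∀ n, m n ≤ 1 := by
      intro n
      haveI := (main n).1
      have h1 : p n (Set.Icc a 1) ≤ 1 := prob_le_one
      have := ENNReal.toReal_mono ENNReal.one_ne_top h1
      simpa using this
    set r : ℕ → ℝ := fun n => (1 - β ((n + 1 : ℕ) : Fin k)) * a / w n with hrdef
    have hrnonneg : ∀ n, 0 ≤ r n := by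
      intro n
      have hβ' := hβ ((n + 1 : ℕ) : Fin k)
      exact div_nonneg (mul_nonneg (by linarith [hβ'.2]) ha0.le) (hwnonneg n)
    have hstepR : ∀ n, r n * m n ≤ m (n + 1) := by
      intro n
      haveI := (main n).1
      haveI := (main (n+1)).1
      have hwn : 0 < w n := hwpos n (main n).1 (main n).2
      have h := ENNReal.toReal_mono (measure_ne_top _ _) (hstep n hwn)
      rwa [ENNReal.toReal_mul, ENNReal.toReal_ofReal (hrnonneg n)] at h
    -- mass growth over one period
    have hper : ∀ n, (∏ j : Fin k, r (k * n + (j : ℕ))) * m (k * n) ≤ m (k * n + k) := by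
      intro n
      have claim : ∀ t, (∏ j ∈ Finset.range t, r (k * n + j)) * m (k * n) ≤ m (k * n + t) := by
        intro t
        induction t with
        | zero => simp
        | succ t iht =>
          calc (∏ j ∈ Finset.range (t+1), r (k * n + j)) * m (k * n)
              = r (k * n + t) * ((∏ j ∈ Finset.range t, r (k * n + j)) * m (k * n)) := by
                rw [Finset.prod_range_succ]; ring
            _ ≤ r (k * n + t) * m (k * n + t) := by
                have := mul_le_mul_of_nonneg_left iht (hrnonneg (k * n + t))
                exact this
            _ ≤ m (k * n + t + 1) := hstepR (k * n + t)
      rw [Fin.prod_univ_eq_prod_range (fun j => r (k * n + j)) k]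
      exact claim k
    -- the product over one period tends to C
    have hidx : ∀ (n : ℕ) (j : Fin k), ((k * n + (j : ℕ) + 1 : ℕ) : Fin k) = j + 1 := by
      intro n j
      push_cast
      simp [Fin.natCast_self, Fin.cast_val_eq_self]
    have hlimj : ∀ j : Fin k, Tendsto (fun n => r (k * n + (j : ℕ))) atTop
        (nhds ((1 - β (j + 1)) * a / wbar j)) := by
      intro j
      have h := (tendsto_const_nhds (x := (1 - β (j + 1)) * a)).div (hconv j) (hwb j).ne'
      refine h.congr (fun n => ?_)
      simp only [hrdef]
      rw [hidx n j]
      rfl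
    have hlim : Tendsto (fun n => ∏ j : Fin k, r (k * n + (j : ℕ))) atTop
        (nhds (∏ j : Fin k, (1 - β (j + 1)) * a / wbar j)) :=
      tendsto_finset_prod _ (fun j _ => hlimj j)
    have hnum : (∏ j : Fin k, (1 - β (j + 1))) = ∏ i : Fin k, (1 - β i) :=
      Fintype.prod_equiv (Equiv.addRight (1 : Fin k)) _ _ (fun j => rfl)
    have hCval : (∏ j : Fin k, (1 - β (j + 1)) * a / wbar j) = C := by
      have h1 : (∏ j : Fin k, (1 - β (j + 1)) * a / wbar j)
          = ((∏ j : Fin k, (1 - β (j + 1))) * ∏ _j : Fin k, a) / ∏ j, wbar j := by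
        rw [← Finset.prod_mul_distrib, ← Finset.prod_div_distrib]
      rw [h1, hnum, Finset.prod_const, Finset.card_univ, Fintype.card_fin,
        hCdef, Finset.prod_div_distrib]
      ring
    rw [hCval] at hlim
    set c : ℝ := (1 + C) / 2 with hcdef
    have hc1 : 1 < c := by rw [hcdef]; linarith
    have hcC : c < C := by rw [hcdef]; linarith
    obtain ⟨N, hN⟩ := eventually_atTop.mp (hlim.eventually (eventually_gt_nhds hcC))
    have hgrow : ∀ t, c ^ t * m (k * N) ≤ m (k * (N + t)) := by
      intro t
      induction t with
      | zero => simp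
      | succ t iht =>
        have hkk : k * (N + (t + 1)) = k * (N + t) + k := by ring
        calc c ^ (t + 1) * m (k * N) = c * (c ^ t * m (k * N)) := by ring
          _ ≤ c * m (k * (N + t)) := by
              have := mul_le_mul_of_nonneg_left iht (by linarith : (0:ℝ) ≤ c)
              exact this
          _ ≤ (∏ j : Fin k, r (k * (N + t) + (j : ℕ))) * m (k * (N + t)) := by
              have hcc := hN (N + t) (by omega)
              exact mul_le_mul_of_nonneg_right hcc.le (hmpos _).le
          _ ≤ m (k * (N + t) + k) := hper (N + t)
          _ = m (k * (N + (t + 1))) := by rw [hkk]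
    obtain ⟨t, ht⟩ :=
      ((tendsto_pow_atTop_atTop_of_one_lt hc1).eventually_gt_atTop (1 / m (k * N))).exists
    have h1 : 1 < c ^ t * m (k * N) := by
      rw [div_lt_iff₀ (hmpos (k * N))] at ht
      linarith
    have := hgrow t
    have := hmle1 (k * (N + t))
    linarith
  -- pass to the limit a → etaSup p₀
  by_contra hlt
  push_neg at hlt
  have htd : Tendsto (fun a : ℝ => a ^ k * ∏ i, (1 - β i) / wbar i)
      (nhdsWithin (etaSup p₀) (Set.Iio (etaSup p₀)))
      (nhds (etaSup p₀ ^ k * ∏ i, (1 - β i) / wbar i)) :=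
    (((continuous_pow k).mul continuous_const).tendsto _).mono_left nhdsWithin_le_nhds
  have h1 : ∀ᶠ a in nhdsWithin (etaSup p₀) (Set.Iio (etaSup p₀)),
      1 < a ^ k * ∏ i, (1 - β i) / wbar i := htd.eventually (eventually_gt_nhds hlt)
  have h2 : ∀ᶠ a in nhdsWithin (etaSup p₀) (Set.Iio (etaSup p₀)), 0 < a :=
    (eventually_gt_nhds hηpos).filter_mono nhdsWithin_le_nhds
  have h3 : ∀ᶠ a in nhdsWithin (etaSup p₀) (Set.Iio (etaSup p₀)), a < etaSup p₀ :=
    eventually_mem_nhdsWithin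
  obtain ⟨aa, ha1, ha2, ha3⟩ := (h1.and (h2.and h3)).exists
  have := key aa ha2 ha3
  linarith [ha1]
end
end

section
/- Let B be a k×k matrix with nonnegative real entries such that for every i ∈ {0,…,k−1} one has B_{i,i} > B_{i,[i+1]} > B_{i,[i+2]} > ⋯ > B_{i,[i+k−1]} > max{B_{i,i} − 1, 0}, where [m] denotes m mod k. Then there is no vector U ∈ ℝ^k having both a strictly positive coordinate and a strictly negative coordinate which satisfies B U = λ U for some real number λ ≥ 1. -/
open Matrix
open Fin.NatCast

private lemma cycleF {k : ℕ} [NeZero k] (o : Fin k) (f : Fin k → ℝ) :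
    ∑ l ∈ Finset.range k, f (o + ((l + 1 : ℕ) : Fin k)) = ∑ j, f j := by
  rw [← Fin.sum_univ_eq_sum_range (fun l => f (o + ((l + 1 : ℕ) : Fin k))) k]
  have h : ∀ j : Fin k, f (o + (((j : ℕ) + 1 : ℕ) : Fin k)) = f (o + 1 + j) := by
    intro j
    congr 1
    have h1 : (((j : ℕ) + 1 : ℕ) : Fin k) = j + 1 := by
      push_cast
      rfl
    rw [h1]
    abel
  simp only [h]
  exact Fintype.sum_equiv (Equiv.addLeft (o + 1)) _ _ (fun j => rfl)

private lemma abelsum (a T : ℕ → ℝ) (hT0 : T 0 = 0) (K : ℕ) :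
    ∑ m ∈ Finset.range (K + 1), a m * (T (m + 1) - T m)
      = a K * T (K + 1) + ∑ m ∈ Finset.range K, (a m - a (m + 1)) * T (m + 1) := by
  induction K with
  | zero => simp [hT0]
  | succ K ih =>
    rw [Finset.sum_range_succ, ih, Finset.sum_range_succ]
    ring

private noncomputable def Qs {k : ℕ} [NeZero k] (U : Fin k → ℝ) (o : Fin k) (r : ℕ) : ℝ :=
  ∑ l ∈ Finset.range r, U (o + ((l + 1 : ℕ) : Fin k))

private lemma Qs_succ {k : ℕ} [NeZero k] (U : Fin k → ℝ) (o : Fin k) (r : ℕ) :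
    Qs U o (r + 1) = Qs U o r + U (o + ((r + 1 : ℕ) : Fin k)) :=
  Finset.sum_range_succ _ r

private lemma Qs_k {k : ℕ} [NeZero k] (U : Fin k → ℝ) (o : Fin k) :
    Qs U o k = ∑ j, U j := cycleF o U

private lemma Qs_shift {k : ℕ} [NeZero k] (U : Fin k → ℝ) (o : Fin k) (r : ℕ) :
    Qs U o (r + k) = Qs U o r + ∑ j, U j := by
  unfold Qs
  rw [Finset.sum_range_add]
  congr 1
  have h : ∀ l : ℕ, o + ((r + l + 1 : ℕ) : Fin k)
      = (o + ((r : ℕ) : Fin k)) + ((l + 1 : ℕ) : Fin k) := by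
    intro l
    push_cast
    abel
  simp only [h]
  exact cycleF (o + ((r : ℕ) : Fin k)) U

private lemma key {k : ℕ} [NeZero k] (hk : 2 ≤ k) (B : Matrix (Fin k) (Fin k) ℝ)
    (hchain : ∀ i : Fin k, ∀ m : ℕ, m + 1 ≤ k - 1 →
      B i (i + ((m : ℕ) : Fin k)) > B i (i + ((m + 1 : ℕ) : Fin k)))
    (hlast : ∀ i : Fin k, B i (i + ((k - 1 : ℕ) : Fin k)) > max (B i i - 1) 0)
    (U : Fin k → ℝ) (lam : ℝ) (hlam : 1 ≤ lam)
    (p : Fin k) (hp : 0 < U p) (n : Fin k) (hn : U n < 0)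
    (heig : B.mulVec U = lam • U) (hS : 0 ≤ ∑ j, U j) : False := by
  set S := ∑ j, U j with hSdef
  set o : Fin k := n - 1 with ho
  have hQ0 : Qs U o 0 = 0 := by simp [Qs]
  have hQ1 : Qs U o 1 = U n := by
    have := Qs_succ U o 0
    rw [hQ0] at this
    rw [this]
    norm_num [ho]
  -- choose t = argmin of Qs over range k
  obtain ⟨t, htmem, htmin⟩ := Finset.exists_min_image (Finset.range k) (Qs U o)
    ⟨0, Finset.mem_range.mpr (by omega)⟩
  have htk : t < k := Finset.mem_range.mp htmem
  have ht1 : 1 ≤ t := by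
    rcases Nat.eq_zero_or_pos t with h0 | h
    · exfalso
      have := htmin 1 (Finset.mem_range.mpr (by omega))
      rw [h0, hQ0, hQ1] at this
      linarith
    · exact h
  set i : Fin k := o + ((t : ℕ) : Fin k) with hi
  set T : ℕ → ℝ := fun m => Qs U o (t + m) - Qs U o t with hT
  have hT0 : T 0 = 0 := by simp [hT]
  have hTrec : ∀ m : ℕ, T (m + 1) = T m + U (i + ((m + 1 : ℕ) : Fin k)) := by
    intro m
    have h1 : Qs U o (t + m + 1) = Qs U o (t + m) + U (o + ((t + m + 1 : ℕ) : Fin k)) :=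
      Qs_succ U o (t + m)
    have h2 : o + ((t + m + 1 : ℕ) : Fin k) = i + ((m + 1 : ℕ) : Fin k) := by
      rw [hi]
      push_cast
      abel
    simp only [hT, show t + (m + 1) = t + m + 1 from rfl, h1, h2]
    ring
  have hTnn : ∀ m : ℕ, m ≤ k → 0 ≤ T m := by
    intro m hm
    rcases Nat.lt_or_ge (t + m) k with hlt | hge
    · have := htmin (t + m) (Finset.mem_range.mpr hlt)
      simp only [hT]
      linarith
    · have hr : t + m = (t + m - k) + k := by omega
      have hrk : t + m - k < k := by omega
      have h1 : Qs U o (t + m) = Qs U o (t + m - k) + S := by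
        have h0 := Qs_shift U o (t + m - k)
        rw [← hr] at h0
        exact h0
      have h2 := htmin (t + m - k) (Finset.mem_range.mpr hrk)
      simp only [hT]
      rw [h1]
      linarith
  have hTk : T k = S := by
    simp only [hT]
    rw [Qs_shift U o t]
    ring
  have hUi : U i ≤ 0 := by
    have h1 : Qs U o t = Qs U o (t - 1) + U (o + ((t - 1 + 1 : ℕ) : Fin k)) := by
      have := Qs_succ U o (t - 1)
      rw [show t - 1 + 1 = t from by omega] at this
      rw [this, show t - 1 + 1 = t from by omega]
    have h2 := htmin (t - 1) (Finset.mem_range.mpr (by omega))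
    rw [show t - 1 + 1 = t from by omega] at h1
    have : U (o + ((t : ℕ) : Fin k)) = Qs U o t - Qs U o (t - 1) := by linarith
    rw [hi, this]
    linarith
  -- the eigen-equation at row i, in Abel form
  set a : ℕ → ℝ := fun m => B i (i + ((m + 1 : ℕ) : Fin k)) with ha
  have hrow : lam * U i = ∑ m ∈ Finset.range k, a m * U (i + ((m + 1 : ℕ) : Fin k)) := by
    have h1 : lam * U i = B.mulVec U i := by
      rw [heig]; simp
    have h2 : B.mulVec U i = ∑ j, B i j * U j := by
      simp [Matrix.mulVec, dotProduct]
    have h3 := cycleF i (fun j => B i j * U j)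
    rw [h1, h2, ← h3]
  have hrow2 : lam * U i = ∑ m ∈ Finset.range k, a m * (T (m + 1) - T m) := by
    rw [hrow]
    refine Finset.sum_congr rfl (fun m _ => ?_)
    rw [hTrec m]
    ring
  have e1 : k - 1 + 1 = k := by omega
  have e2 : k - 2 + 1 = k - 1 := by omega
  have hE : lam * U i = a (k - 1) * T k
      + ∑ m ∈ Finset.range (k - 1), (a m - a (m + 1)) * T (m + 1) := by
    rw [hrow2, ← e1, abelsum a T hT0 (k - 1), e1]
  have hak : a (k - 1) = B i i := by
    simp only [ha, e1]
    rw [show ((k : ℕ) : Fin k) = 0 from Fin.natCast_self k, add_zero]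
  have hTk1 : T (k - 1) = S - U i := by
    have := hTrec (k - 1)
    rw [e1, hTk] at this
    have h2 : i + ((k : ℕ) : Fin k) = i := by
      rw [show ((k : ℕ) : Fin k) = 0 from Fin.natCast_self k, add_zero]
    rw [h2] at this
    linarith
  have hsplit : ∑ m ∈ Finset.range (k - 1), (a m - a (m + 1)) * T (m + 1)
      = ∑ m ∈ Finset.range (k - 2), (a m - a (m + 1)) * T (m + 1)
        + (a (k - 2) - a (k - 1)) * T (k - 1) := by
    rw [← e2, Finset.sum_range_succ, e2]
  have hE' : (lam + a (k - 2) - B i i) * U i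
      = a (k - 2) * S + ∑ m ∈ Finset.range (k - 2), (a m - a (m + 1)) * T (m + 1) := by
    rw [hsplit, hak, hTk, hTk1] at hE
    linarith
  -- positivity facts
  have ha' : 0 < a (k - 2) ∧ B i i - 1 < a (k - 2) := by
    have h := hlast i
    have : a (k - 2) = B i (i + ((k - 1 : ℕ) : Fin k)) := by
      simp only [ha, e2]
    rw [this]
    constructor
    · exact lt_of_le_of_lt (le_max_right _ _) h
    · exact lt_of_le_of_lt (le_max_left _ _) h
  have hκ : 0 < lam + a (k - 2) - B i i := by
    have := ha'.2
    linarith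
  have hw : ∀ m ∈ Finset.range (k - 2), 0 < a m - a (m + 1) := by
    intro m hm
    have hmk : m + 1 + 1 ≤ k - 1 := by
      have := Finset.mem_range.mp hm
      omega
    have := hchain i (m + 1) hmk
    simp only [ha]
    linarith [this]
  have hsum_nn : 0 ≤ ∑ m ∈ Finset.range (k - 2), (a m - a (m + 1)) * T (m + 1) := by
    refine Finset.sum_nonneg (fun m hm => ?_)
    have h1 := hw m hm
    have h2 : 0 ≤ T (m + 1) := hTnn (m + 1) (by have := Finset.mem_range.mp hm; omega)
    positivity
  rcases hS.eq_or_lt with hS0 | hSpos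
  · -- S = 0 : get U ≡ 0, contradiction with hp
    have hUi0 : U i = 0 := by
      have h1 : 0 ≤ (lam + a (k - 2) - B i i) * U i := by
        rw [hE', ← hS0]
        linarith
      nlinarith
    have hsum0 : ∑ m ∈ Finset.range (k - 2), (a m - a (m + 1)) * T (m + 1) = 0 := by
      rw [hUi0, ← hS0] at hE'
      linarith
    have hTzero : ∀ m ∈ Finset.range (k - 2), T (m + 1) = 0 := by
      intro m hm
      have := (Finset.sum_eq_zero_iff_of_nonneg (fun m hm => by
        have h1 := hw m hm
        have h2 : 0 ≤ T (m + 1) := hTnn (m + 1) (by have := Finset.mem_range.mp hm; omega)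
        positivity)).mp hsum0 m hm
      have h1 := hw m hm
      rcases mul_eq_zero.mp this with h | h
      · linarith
      · exact h
    have hTall : ∀ m : ℕ, m ≤ k → T m = 0 := by
      intro m hm
      rcases Nat.eq_zero_or_pos m with h0 | h1
      · rw [h0, hT0]
      · rcases Nat.lt_or_ge m (k - 1) with h2 | h2
        · have h4 := hTzero (m - 1) (Finset.mem_range.mpr (by omega))
          rwa [show m - 1 + 1 = m from by omega] at h4
        · rcases Nat.eq_or_lt_of_le h2 with h3 | h3
          · rw [← h3, hTk1, hUi0, ← hS0]
            ring
          · rw [show m = k from by omega, hTk, ← hS0]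
    have hUzero : ∀ j : Fin k, U j = 0 := by
      intro j
      set m : ℕ := ((j - (i + 1) : Fin k) : ℕ) with hm
      have hmk : m < k := (j - (i + 1)).isLt
      have hij : i + ((m + 1 : ℕ) : Fin k) = j := by
        have : ((m : ℕ) : Fin k) = j - (i + 1) := by
          rw [hm, Fin.cast_val_eq_self]
        push_cast
        rw [this]
        abel
      have := hTrec m
      rw [hTall m (by omega), hTall (m + 1) (by omega), hij] at this
      linarith
    have := hUzero p
    linarith
  · -- S > 0
    have h1 : (lam + a (k - 2) - B i i) * U i ≤ 0 :=
      mul_nonpos_of_nonneg_of_nonpos (le_of_lt hκ) hUi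
    have h2 : 0 < a (k - 2) * S := mul_pos ha'.1 hSpos
    rw [hE'] at h1
    linarith

/-- Let `B` be a `k×k` matrix with nonnegative real entries such that for every
row `i` one has `B i i > B i [i+1] > ⋯ > B i [i+k-1] > max (B i i - 1) 0` (indices mod `k`).
Then there is no vector `U ∈ ℝ^k` having both a strictly positive and a strictly negative
coordinate which satisfies `B U = λ U` for some real `λ ≥ 1`. -/
theorem stmt_14 (k : ℕ) [NeZero k] (B : Matrix (Fin k) (Fin k) ℝ)
    (hnn : ∀ i j, 0 ≤ B i j)
    (hchain : ∀ i : Fin k, ∀ m : ℕ, m + 1 ≤ k - 1 →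
      B i (i + ((m : ℕ) : Fin k)) > B i (i + ((m + 1 : ℕ) : Fin k)))
    (hlast : ∀ i : Fin k, B i (i + ((k - 1 : ℕ) : Fin k)) > max (B i i - 1) 0) :
    ¬ ∃ (U : Fin k → ℝ) (lam : ℝ), 1 ≤ lam ∧ (∃ i, 0 < U i) ∧ (∃ i, U i < 0) ∧
      B.mulVec U = lam • U := by
  rintro ⟨U, lam, hlam, ⟨p, hp⟩, ⟨n, hn⟩, heig⟩
  have hk0 : 0 < k := NeZero.pos k
  rcases Nat.lt_or_ge k 2 with hk1 | hk
  · -- k = 1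
    have hk1' : k = 1 := by omega
    subst hk1'
    have : p = n := Subsingleton.elim p n
    rw [this] at hp
    linarith
  · rcases le_or_gt 0 (∑ j, U j) with hS | hS
    · exact key hk B hchain hlast U lam hlam p hp n hn heig hS
    · refine key hk B hchain hlast (-U) lam hlam n ?_ p ?_ ?_ ?_
      · simpa using hn
      · simpa using hp
      · rw [Matrix.mulVec_neg, heig, smul_neg]
      · have : ∑ j, (-U) j = -∑ j, U j := by simp
        rw [this]
        linarith
end

section
/- Let B be a k×k real matrix each of whose columns sums to zero, i.e. Σ_{i=0}^{k−1} B_{i,j} = 0 for every j. For i, j ∈ {0,…,k−1} let M_{ij} denote the (i,j)-minor of B (the determinant of the matrix obtained from B by deleting its i-th row and j-th column). Then M_{ij} = (−1)^{i+j} M_{jj} for all i, j ∈ {0,…,k−1}. -/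
open Matrix

lemma aux_det_update (m : ℕ) (B : Matrix (Fin (m + 1)) (Fin (m + 1)) ℝ)
    (i j : Fin (m + 1)) :
    (B.updateCol j (Pi.single i 1)).det
      = (-1 : ℝ) ^ ((i : ℕ) + (j : ℕ)) * (B.submatrix i.succAbove j.succAbove).det := by
  rw [det_succ_column _ j]
  simp_rw [updateCol_self, submatrix_updateCol_succAbove]
  rw [Fintype.sum_eq_single i fun k hk => ?_, Pi.single_eq_same, mul_one]
  rw [Pi.single_eq_of_ne hk, mul_zero, zero_mul]

lemma aux_det_zero (m : ℕ) (B : Matrix (Fin (m + 1)) (Fin (m + 1)) ℝ)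
    (hcol : ∀ j, ∑ i, B i j = 0) (j : Fin (m + 1)) (v : Fin (m + 1) → ℝ)
    (hv : ∑ i, v i = 0) : (B.updateCol j v).det = 0 := by
  rw [← exists_vecMul_eq_zero_iff]
  refine ⟨fun _ => 1, by simp [funext_iff], ?_⟩
  ext c
  simp only [vecMul, dotProduct, one_mul, Pi.zero_apply]
  by_cases hc : c = j
  · subst hc; simp [updateCol_apply, hv]
  · simpa [updateCol_apply, hc] using hcol c

/-- Let `B` be a `k×k` real matrix each of whose columns sums to zero.
If `M i j` denotes the `(i,j)`-minor of `B` (the determinant of `B` with row `i` and column `j`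
deleted), then `M i j = (−1)^(i+j) * M j j` for all `i, j`. -/
theorem stmt_17 (m : ℕ) (B : Matrix (Fin (m + 1)) (Fin (m + 1)) ℝ)
    (hcol : ∀ j, ∑ i, B i j = 0) (i j : Fin (m + 1)) :
    (B.submatrix i.succAbove j.succAbove).det
      = (-1 : ℝ) ^ ((i : ℕ) + (j : ℕ)) * (B.submatrix j.succAbove j.succAbove).det := by
  have key : (B.updateCol j (Pi.single i 1)).det
      = (B.updateCol j (Pi.single j 1)).det := by
    have hsub : (B.updateCol j (Pi.single i 1 - Pi.single j 1)).det = 0 := by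
      refine aux_det_zero m B hcol j _ ?_
      simp [Finset.sum_sub_distrib]
    have := det_updateCol_add B j (Pi.single i 1 - Pi.single j 1) (Pi.single j 1)
    rw [sub_add_cancel, hsub, zero_add] at this
    exact this
  rw [aux_det_update, aux_det_update] at key
  have h1 : ((-1 : ℝ) ^ ((j : ℕ) + (j : ℕ))) = 1 := by
    rw [← two_mul, pow_mul]; norm_num
  rw [h1, one_mul] at key
  have h2 : ((-1 : ℝ) ^ ((i : ℕ) + (j : ℕ))) * ((-1 : ℝ) ^ ((i : ℕ) + (j : ℕ))) = 1 := by
    rw [← pow_add, ← two_mul, pow_mul]; norm_num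
  calc (B.submatrix i.succAbove j.succAbove).det
      = ((-1:ℝ) ^ ((i:ℕ)+(j:ℕ)) * (-1:ℝ) ^ ((i:ℕ)+(j:ℕ)))
          * (B.submatrix i.succAbove j.succAbove).det := by rw [h2, one_mul]
    _ = (-1:ℝ) ^ ((i:ℕ)+(j:ℕ)) * (B.submatrix j.succAbove j.succAbove).det := by
          rw [mul_assoc, key]
end

section
/- Let k = 2 and z ∈ I_μ. Define Γ₂(z) := (1 − ∫ β₀ q₀(dx)/(1 − zx)) / (1 − ∫ β₀ q₀(dx)/(1 + zx)) + (1 − ∫ β₁ q₁(dx)/(1 − zx)) / (1 − ∫ β₁ q₁(dx)/(1 + zx)) (both denominators are positive since β₀, β₁ < 1). Then Γ₂(z) and det(I₂ − A(z)) have the same sign, in the sense that they are both negative, both null, or both positive; in particular (via the sign equivalence between det(I₂ − A(z)) and 1 − ρ(A(z))), Γ₂(z) and 1 − ρ(A(z)) have the same sign. -/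
open MeasureTheory Matrix Filter

noncomputable section

private lemma aux_main (μ : Measure ℝ) [IsProbabilityMeasure μ] (β : ℝ)
    (hβ0 : 0 < β)
    (hμc : μ (Set.Icc (0:ℝ) 1)ᶜ = 0) (z : ℝ) (hz0 : 0 ≤ z)
    (hfin : (∑' n : ℕ, ENNReal.ofReal (z ^ n) * ∫⁻ x, ENNReal.ofReal (x ^ n * β) ∂μ) < ⊤) :
    (∀ᵐ x ∂μ, 0 ≤ x ∧ x ≤ 1 ∧ z * x < 1) ∧
    Integrable (fun x => β / (1 - z * x)) μ ∧
    Integrable (fun x => β / (1 + z * x)) μ ∧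
    (∫ x, (z*x)^0 / (1 - (z*x)^2) * β ∂μ
      = ((∫ x, β / (1 - z * x) ∂μ) + ∫ x, β / (1 + z * x) ∂μ) / 2) ∧
    (∫ x, (z*x)^1 / (1 - (z*x)^2) * β ∂μ
      = ((∫ x, β / (1 - z * x) ∂μ) - ∫ x, β / (1 + z * x) ∂μ) / 2) := by
  have hIcc : ∀ᵐ x ∂μ, x ∈ Set.Icc (0:ℝ) 1 := by
    have he : {x : ℝ | ¬ x ∈ Set.Icc (0:ℝ) 1} = (Set.Icc (0:ℝ) 1)ᶜ := rfl
    rw [ae_iff, he]; exact hμc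
  set F : ℕ → ℝ → ENNReal := fun n x => ENNReal.ofReal (z ^ n) * ENNReal.ofReal (x ^ n * β)
    with hF
  have hmeasn : ∀ n : ℕ, Measurable (F n) := by
    intro n
    exact (measurable_const.mul (((measurable_id.pow_const n).mul_const β).ennreal_ofReal))
  have hfin' : ∫⁻ x, ∑' n, F n x ∂μ < ⊤ := by
    rw [lintegral_tsum (fun n => (hmeasn n).aemeasurable)]
    have h1 : ∀ n : ℕ, ∫⁻ x, F n x ∂μ
        = ENNReal.ofReal (z ^ n) * ∫⁻ x, ENNReal.ofReal (x ^ n * β) ∂μ := fun n =>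
      lintegral_const_mul _ (((measurable_id.pow_const n).mul_const β).ennreal_ofReal)
    simpa [h1] using hfin
  have hmeasG : Measurable fun x => ∑' n, F n x :=
    Measurable.ennreal_tsum hmeasn
  have hltG : ∀ᵐ x ∂μ, (∑' n, F n x) < ⊤ := ae_lt_top hmeasG hfin'.ne
  have hae : ∀ᵐ x ∂μ, 0 ≤ x ∧ x ≤ 1 ∧ z * x < 1 := by
    filter_upwards [hIcc, hltG] with x hx hlt
    refine ⟨hx.1, hx.2, ?_⟩
    by_contra hcon
    push_neg at hcon
    have hterm : ∀ n : ℕ, ENNReal.ofReal β ≤ F n x := by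
      intro n
      have h1 : (1:ℝ) ≤ (z*x)^n := one_le_pow₀ hcon
      have : ENNReal.ofReal β ≤ ENNReal.ofReal ((z*x)^n * β) := by
        apply ENNReal.ofReal_le_ofReal; nlinarith
      refine this.trans (le_of_eq ?_)
      simp only [hF]
      rw [← ENNReal.ofReal_mul (pow_nonneg hz0 n)]
      congr 1
      rw [mul_pow]; ring
    have htop : (⊤ : ENNReal) ≤ ∑' n, F n x := by
      calc (⊤ : ENNReal) = ∑' _ : ℕ, ENNReal.ofReal β :=
            (ENNReal.tsum_const_eq_top_of_ne_zero (ENNReal.ofReal_pos.mpr hβ0).ne').symm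
        _ ≤ ∑' n, F n x := ENNReal.tsum_le_tsum hterm
    exact absurd hlt (by simp [top_le_iff.mp htop])
  have hG : ∀ᵐ x ∂μ, (∑' n, F n x) = ENNReal.ofReal (β / (1 - z * x)) := by
    filter_upwards [hae] with x hx
    obtain ⟨hx0, hx1, hzx⟩ := hx
    have hzx0 : 0 ≤ z * x := mul_nonneg hz0 hx0
    have hFx : ∀ n : ℕ, F n x = ENNReal.ofReal ((z*x)^n * β) := by
      intro n
      simp only [hF]
      rw [← ENNReal.ofReal_mul (pow_nonneg hz0 n)]
      congr 1
      rw [mul_pow]; ring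
    rw [tsum_congr hFx,
      ← ENNReal.ofReal_tsum_of_nonneg (fun n => by positivity)
        ((summable_geometric_of_lt_one hzx0 hzx).mul_right β)]
    congr 1
    rw [tsum_mul_right, tsum_geometric_of_lt_one hzx0 hzx, inv_mul_eq_div]
  have hlint : ∫⁻ x, ENNReal.ofReal (β / (1 - z * x)) ∂μ < ⊤ := by
    rw [← lintegral_congr_ae hG]; exact hfin'
  have hmeasf : Measurable fun x : ℝ => β / (1 - z * x) :=
    measurable_const.div (measurable_const.sub (measurable_id.const_mul z))
  have hmeasg : Measurable fun x : ℝ => β / (1 + z * x) :=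
    measurable_const.div (measurable_const.add (measurable_id.const_mul z))
  have hfnn : 0 ≤ᵐ[μ] fun x => β / (1 - z * x) := by
    filter_upwards [hae] with x hx
    have : 0 < 1 - z * x := by linarith [hx.2.2]
    positivity
  have hIntf : Integrable (fun x => β / (1 - z * x)) μ := by
    refine ⟨hmeasf.aestronglyMeasurable, ?_⟩
    rw [hasFiniteIntegral_iff_ofReal hfnn]
    exact hlint
  have hIntg : Integrable (fun x => β / (1 + z * x)) μ := by
    refine Integrable.mono' (integrable_const β) hmeasg.aestronglyMeasurable ?_
    filter_upwards [hae] with x hx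
    have h1 : (0:ℝ) ≤ z * x := mul_nonneg hz0 hx.1
    rw [Real.norm_eq_abs, abs_of_nonneg (by positivity)]
    exact div_le_self hβ0.le (by linarith)
  refine ⟨hae, hIntf, hIntg, ?_, ?_⟩
  · have heq : ∀ᵐ x ∂μ, (z*x)^0 / (1 - (z*x)^2) * β
        = (β / (1 - z * x) + β / (1 + z * x)) / 2 := by
      filter_upwards [hae] with x hx
      obtain ⟨hx0, hx1, hzx⟩ := hx
      have h1 : (1:ℝ) - z * x ≠ 0 := by linarith
      have hzx0 : (0:ℝ) ≤ z * x := mul_nonneg hz0 hx0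
      have h2 : (1:ℝ) + z * x ≠ 0 := by nlinarith
      have h3 : (1:ℝ) - (z*x)^2 ≠ 0 := by nlinarith
      rw [show (1:ℝ) - (z*x)^2 = (1 - z*x) * (1 + z*x) by ring]
      field_simp
      ring
    rw [integral_congr_ae heq, integral_div, integral_add hIntf hIntg]
  · have heq : ∀ᵐ x ∂μ, (z*x)^1 / (1 - (z*x)^2) * β
        = (β / (1 - z * x) - β / (1 + z * x)) / 2 := by
      filter_upwards [hae] with x hx
      obtain ⟨hx0, hx1, hzx⟩ := hx
      have h1 : (1:ℝ) - z * x ≠ 0 := by linarith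
      have hzx0 : (0:ℝ) ≤ z * x := mul_nonneg hz0 hx0
      have h2 : (1:ℝ) + z * x ≠ 0 := by nlinarith
      have h3 : (1:ℝ) - (z*x)^2 ≠ 0 := by nlinarith
      rw [show (1:ℝ) - (z*x)^2 = (1 - z*x) * (1 + z*x) by ring]
      field_simp
      ring
    rw [integral_congr_ae heq, integral_div, integral_sub hIntf hIntg]

private lemma aux_part1 (G a0 b0 a1 b1 D : ℝ) (hb0 : b0 < 1) (hb1 : b1 < 1)
    (hD : D = ((1 - a0) * (1 - b1) + (1 - b0) * (1 - a1)) / 2)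
    (hG : G = (1 - a0) / (1 - b0) + (1 - a1) / (1 - b1)) :
    (G < 0 ↔ D < 0) ∧ (G = 0 ↔ D = 0) ∧ (0 < G ↔ 0 < D) := by
  have hd0 : (0:ℝ) < 1 - b0 := by linarith
  have hd1 : (0:ℝ) < 1 - b1 := by linarith
  have hdd : (0:ℝ) < (1 - b0) * (1 - b1) := mul_pos hd0 hd1
  have hkey : G * ((1 - b0) * (1 - b1)) = 2 * D := by
    rw [hG, hD]; field_simp
  refine ⟨⟨fun h => ?_, fun h => ?_⟩, ⟨fun h => ?_, fun h => ?_⟩, ⟨fun h => ?_, fun h => ?_⟩⟩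
  · nlinarith
  · nlinarith
  · rw [h, zero_mul] at hkey; linarith
  · exact (mul_eq_zero.mp (by rw [hkey, h]; ring)).resolve_right hdd.ne'
  · nlinarith
  · nlinarith


private lemma signMulAux18 (D c E : ℝ) (hE : 0 < E) (h : D = c * E) :
    (D < 0 ↔ c < 0) ∧ (D = 0 ↔ c = 0) ∧ (0 < D ↔ 0 < c) := by
  subst h
  refine ⟨⟨fun h => ?_, fun h => mul_neg_of_neg_of_pos h hE⟩,
    ⟨fun h => ?_, fun h => by rw [h, zero_mul]⟩,
    ⟨fun h => ?_, fun h => mul_pos h hE⟩⟩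
  · by_contra hc; push_neg at hc; nlinarith
  · exact (mul_eq_zero.mp h).resolve_right hE.ne'
  · by_contra hc; push_neg at hc; nlinarith

private lemma aux_E (a0 b0 a1 b1 r : ℝ) (hb0 : b0 < 1) (hb1 : b1 < 1)
    (hrp : (a0 + b0) / 2 ≤ r) (hru : (a1 + b1) / 2 ≤ r)
    (heq : ((1 - a0) * (1 - b1) + (1 - b0) * (1 - a1)) / 2
      = (1 - r) * (1 + r - (a0 + b0) / 2 - (a1 + b1) / 2)) :
    0 < 1 + r - (a0 + b0) / 2 - (a1 + b1) / 2 := by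
  by_contra hE
  push_neg at hE
  have ha0' : (1:ℝ) < a0 := by linarith
  have ha1' : (1:ℝ) < a1 := by linarith
  have hr1 : (1:ℝ) ≤ r := by linarith
  nlinarith [mul_pos (by linarith : (0:ℝ) < a0 - 1) (by linarith : (0:ℝ) < 1 - b1),
    mul_pos (by linarith : (0:ℝ) < 1 - b0) (by linarith : (0:ℝ) < a1 - 1),
    mul_nonneg (by linarith : (0:ℝ) ≤ r - 1)
      (by linarith : (0:ℝ) ≤ (a0 + b0) / 2 + (a1 + b1) / 2 - 1 - r)]

private lemma aux_part2 (a0 b0 a1 b1 D r v0 v1 : ℝ) (hb0 : b0 < 1) (hb1 : b1 < 1)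
    (hab0 : b0 ≤ a0) (hab1 : b1 ≤ a1)
    (hD : D = ((1 - a0) * (1 - b1) + (1 - b0) * (1 - a1)) / 2)
    (hv0 : 0 < v0) (hv1 : 0 < v1)
    (eq0 : (a0 + b0) / 2 * v0 + (a1 - b1) / 2 * v1 = r * v0)
    (eq1 : (a0 - b0) / 2 * v0 + (a1 + b1) / 2 * v1 = r * v1) :
    (D < 0 ↔ 1 - r < 0) ∧ (D = 0 ↔ 1 - r = 0) ∧ (0 < D ↔ 0 < 1 - r) := by
  have hs : (0:ℝ) ≤ (a1 - b1) / 2 := by linarith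
  have ht : (0:ℝ) ≤ (a0 - b0) / 2 := by linarith
  have hrp : (a0 + b0) / 2 ≤ r := by nlinarith [mul_nonneg hs hv1.le]
  have hru : (a1 + b1) / 2 ≤ r := by nlinarith [mul_nonneg ht hv0.le]
  have h1 : (a1 - b1) / 2 * v1 = (r - (a0 + b0) / 2) * v0 := by linarith
  have h2 : (a0 - b0) / 2 * v0 = (r - (a1 + b1) / 2) * v1 := by linarith
  have h3 : (((a1 - b1) / 2) * ((a0 - b0) / 2)
      - (r - (a0 + b0) / 2) * (r - (a1 + b1) / 2)) * (v0 * v1) = 0 := by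
    linear_combination ((a0 - b0) / 2 * v0) * h1 + ((r - (a0 + b0) / 2) * v0) * h2
  have hst : ((a1 - b1) / 2) * ((a0 - b0) / 2)
      = (r - (a0 + b0) / 2) * (r - (a1 + b1) / 2) := by
    have h4 := (mul_eq_zero.mp h3).resolve_right (mul_pos hv0 hv1).ne'
    linarith
  have hdet2 : D = (1 - r) * (1 + r - (a0 + b0) / 2 - (a1 + b1) / 2) := by
    rw [hD]; linear_combination -hst
  have hEpos := aux_E a0 b0 a1 b1 r hb0 hb1 hrp hru (by rw [← hD]; exact hdet2)
  exact signMulAux18 D (1 - r) _ hEpos hdet2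

set_option maxHeartbeats 1000000 in
/-- `k = 2` case. With
`Γ₂(z) = (1 − ∫ β₀ q₀(dx)/(1−zx)) / (1 − ∫ β₀ q₀(dx)/(1+zx))
       + (1 − ∫ β₁ q₁(dx)/(1−zx)) / (1 − ∫ β₁ q₁(dx)/(1+zx))`,
the quantities `Γ₂(z)` and `det (I₂ − A(z))` have the same sign; in particular `Γ₂(z)` and
`1 − ρ(A(z))` have the same sign (the Perron eigenvalue being a positive real eigenvalue with a
positive eigenvector). -/
theorem stmt_18 (β : Fin 2 → ℝ) (q : Fin 2 → Measure ℝ)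
    [∀ i, IsProbabilityMeasure (q i)]
    (hβ : ∀ i, β i ∈ Set.Ioo (0:ℝ) 1)
    (hq : ∀ i, q i (Set.Icc (0:ℝ) 1)ᶜ = 0)
    (hηq : ∀ i, 0 < etaSup (q i))
    (z : ℝ) (hz : memIm 2 β q z)
    (Γ : ℝ)
    (hΓ : Γ = (1 - ∫ x, β 0 / (1 - z * x) ∂(q 0)) / (1 - ∫ x, β 0 / (1 + z * x) ∂(q 0))
            + (1 - ∫ x, β 1 / (1 - z * x) ∂(q 1)) / (1 - ∫ x, β 1 / (1 + z * x) ∂(q 1))) :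
    ((Γ < 0 ↔ (1 - Amat 2 β q z).det < 0) ∧
     (Γ = 0 ↔ (1 - Amat 2 β q z).det = 0) ∧
     (0 < Γ ↔ 0 < (1 - Amat 2 β q z).det)) ∧
    (∀ r : ℝ, 0 < r →
      (∃ v : Fin 2 → ℝ, (∀ i, 0 < v i) ∧ (Amat 2 β q z).mulVec v = r • v) →
      ((Γ < 0 ↔ 1 - r < 0) ∧ (Γ = 0 ↔ 1 - r = 0) ∧ (0 < Γ ↔ 0 < 1 - r))) := by
  obtain ⟨hz0, hzfin⟩ := hz
  obtain ⟨hae0, hIf0, hIg0, hE00, hE01⟩ :=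
    aux_main (q 0) (β 0) (hβ 0).1 (hq 0) z hz0 (hzfin 0)
  obtain ⟨hae1, hIf1, hIg1, hE10, hE11⟩ :=
    aux_main (q 1) (β 1) (hβ 1).1 (hq 1) z hz0 (hzfin 1)
  set a0 := ∫ x, β 0 / (1 - z * x) ∂(q 0) with ha0def
  set b0 := ∫ x, β 0 / (1 + z * x) ∂(q 0) with hb0def
  set a1 := ∫ x, β 1 / (1 - z * x) ∂(q 1) with ha1def
  set b1 := ∫ x, β 1 / (1 + z * x) ∂(q 1) with hb1def
  have hb0le : b0 ≤ β 0 := by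
    have h := integral_mono_ae hIg0 (integrable_const (β 0))
      (by filter_upwards [hae0] with x hx
          exact div_le_self (hβ 0).1.le (by nlinarith [mul_nonneg hz0 hx.1]))
    simpa using h
  have hb1le : b1 ≤ β 1 := by
    have h := integral_mono_ae hIg1 (integrable_const (β 1))
      (by filter_upwards [hae1] with x hx
          exact div_le_self (hβ 1).1.le (by nlinarith [mul_nonneg hz0 hx.1]))
    simpa using h
  have hb0lt : b0 < 1 := lt_of_le_of_lt hb0le (hβ 0).2
  have hb1lt : b1 < 1 := lt_of_le_of_lt hb1le (hβ 1).2
  have hab0 : b0 ≤ a0 := by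
    refine integral_mono_ae hIg0 hIf0 ?_
    filter_upwards [hae0] with x hx
    obtain ⟨hx0, hx1, hzx⟩ := hx
    have h1 : (0:ℝ) < 1 - z * x := by linarith
    have h2 : (0:ℝ) < 1 + z * x := by nlinarith [mul_nonneg hz0 hx0]
    rw [div_le_div_iff₀ h2 h1]
    nlinarith [mul_nonneg hz0 hx0, (hβ 0).1.le]
  have hab1 : b1 ≤ a1 := by
    refine integral_mono_ae hIg1 hIf1 ?_
    filter_upwards [hae1] with x hx
    obtain ⟨hx0, hx1, hzx⟩ := hx
    have h1 : (0:ℝ) < 1 - z * x := by linarith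
    have h2 : (0:ℝ) < 1 + z * x := by nlinarith [mul_nonneg hz0 hx0]
    rw [div_le_div_iff₀ h2 h1]
    nlinarith [mul_nonneg hz0 hx0, (hβ 1).1.le]
  have e00 : Amat 2 β q z 0 0 = (a0 + b0) / 2 := by
    have h : ((0 - 0 : Fin 2) : ℕ) = 0 := rfl
    simp only [Amat, Matrix.of_apply, h]
    exact hE00
  have e01 : Amat 2 β q z 0 1 = (a1 - b1) / 2 := by
    have h : ((0 - 1 : Fin 2) : ℕ) = 1 := rfl
    simp only [Amat, Matrix.of_apply, h]
    exact hE11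
  have e10 : Amat 2 β q z 1 0 = (a0 - b0) / 2 := by
    have h : ((1 - 0 : Fin 2) : ℕ) = 1 := rfl
    simp only [Amat, Matrix.of_apply, h]
    exact hE01
  have e11 : Amat 2 β q z 1 1 = (a1 + b1) / 2 := by
    have h : ((1 - 1 : Fin 2) : ℕ) = 0 := rfl
    simp only [Amat, Matrix.of_apply, h]
    exact hE10
  have hA : (1 - Amat 2 β q z).det
      = ((1 - a0) * (1 - b1) + (1 - b0) * (1 - a1)) / 2 := by
    have o00 : (1 : Matrix (Fin 2) (Fin 2) ℝ) 0 0 = 1 := rfl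
    have o01 : (1 : Matrix (Fin 2) (Fin 2) ℝ) 0 1 = 0 := rfl
    have o10 : (1 : Matrix (Fin 2) (Fin 2) ℝ) 1 0 = 0 := rfl
    have o11 : (1 : Matrix (Fin 2) (Fin 2) ℝ) 1 1 = 1 := rfl
    rw [Matrix.det_fin_two]
    simp only [Matrix.sub_apply, o00, o01, o10, o11, e00, e01, e10, e11]
    ring
  have part1 := aux_part1 Γ a0 b0 a1 b1 _ hb0lt hb1lt hA hΓ
  refine ⟨part1, fun r hr hex => ?_⟩
  obtain ⟨v, hv, hve⟩ := hex
  have eq0 : Amat 2 β q z 0 0 * v 0 + Amat 2 β q z 0 1 * v 1 = r * v 0 := by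
    have h := congrFun hve 0
    simpa [Matrix.mulVec, dotProduct, Fin.sum_univ_two] using h
  have eq1 : Amat 2 β q z 1 0 * v 0 + Amat 2 β q z 1 1 * v 1 = r * v 1 := by
    have h := congrFun hve 1
    simpa [Matrix.mulVec, dotProduct, Fin.sum_univ_two] using h
  rw [e00, e01] at eq0
  rw [e10, e11] at eq1
  have part2 := aux_part2 a0 b0 a1 b1 _ r (v 0) (v 1) hb0lt hb1lt hab0 hab1 hA
    (hv 0) (hv 1) eq0 eq1
  exact ⟨part1.1.trans part2.1, part1.2.1.trans part2.2.1, part1.2.2.trans part2.2.2⟩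
end
end
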